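/- arXiv:2207.06005 — 2 statements merged into one kernel-verified Lean document; each statement's English description precedes it below -/
import Mathlib

section
/- Let q ≥ 0 be an integer. If two groups G and H are q̂-isoclinic, then B̂₀^q(G) ≅ B̂₀^q(H); i.e. the q̂-Bogomolov multiplier is invariant under q̂-isoclinism. -/
/-!
Nonabelian tensor square modulo `q` (Conduché–Ellis / Brown–Loday for `q = 0`),
presented by generators `g ⊗ h` and `{(g,g)}` with the defining relations.
-/

namespace QTensor

/-- Generators of the `q`-tensor square: `t g h` stands for `g ⊗ h`,
and `d g` stands for the symbol `{(g,g)}`. -/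
inductive Gen (G : Type) : Type
  | t : G → G → Gen G
  | d : G → Gen G

variable (G : Type) [Group G]

/-- The word `g ⊗ h` in the free group on the generators. -/
def T (g h : G) : FreeGroup (Gen G) := FreeGroup.of (Gen.t g h)

/-- The word `{(g,g)}` in the free group on the generators. -/
def D (g : G) : FreeGroup (Gen G) := FreeGroup.of (Gen.d g)

/-- The word `∏_{i=1}^{q-1} (g⁻¹ ⊗ (^(g^(1-q+i)) g₁)^i)` appearing in relation (4). -/
def relProd (q : ℕ) (g g₁ : G) : FreeGroup (Gen G) :=
  ((List.range (q - 1)).map (fun j =>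
    T G g⁻¹ ((g ^ ((1 : ℤ) - (q : ℤ) + (j + 1 : ℕ)) * g₁ *
      (g ^ ((1 : ℤ) - (q : ℤ) + (j + 1 : ℕ)))⁻¹) ^ (j + 1)))).prod

/-- The defining relations of the `q`-tensor square.  For `q = 0` the symbols
`{(g,g)}` are killed, so that the group is the Brown–Loday nonabelian tensor
square generated by the `g ⊗ h` subject to relations (1) and (2). -/
def rels (q : ℕ) : Set (FreeGroup (Gen G)) :=
  {r | ∃ g g₁ h : G,
      r = T G (g * g₁) h * (T G (g * g₁ * g⁻¹) (g * h * g⁻¹) * T G g h)⁻¹} ∪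
  {r | ∃ g h h₁ : G,
      r = T G g (h * h₁) * (T G g h * T G (h * g * h⁻¹) (h * h₁ * h⁻¹))⁻¹} ∪
  {r | ∃ g g₁ h₁ : G,
      r = D G g * T G g₁ h₁ * (D G g)⁻¹ *
        (T G (g ^ q * g₁ * (g ^ q)⁻¹) (g ^ q * h₁ * (g ^ q)⁻¹))⁻¹} ∪
  {r | ∃ g g₁ : G,
      r = D G (g * g₁) * (D G g * relProd G q g g₁ * D G g₁)⁻¹} ∪
  {r | ∃ g g₁ : G,
      r = D G g * D G g₁ * (D G g)⁻¹ * (D G g₁)⁻¹ * (T G (g ^ q) (g₁ ^ q))⁻¹} ∪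
  {r | ∃ g h : G,
      r = D G (g * h * g⁻¹ * h⁻¹) * ((T G g h) ^ q)⁻¹} ∪
  {r | q = 0 ∧ ∃ g : G, r = D G g}

/-- The nonabelian tensor square modulo `q`, `G ⊗^q G`. -/
def tensorSquare (q : ℕ) : Type := PresentedGroup (rels G q)

instance (q : ℕ) : Group (tensorSquare G q) := by unfold tensorSquare; infer_instance

/-- The element `g ⊗ h` of `G ⊗^q G`. -/
def tmk (q : ℕ) (g h : G) : tensorSquare G q := PresentedGroup.of (Gen.t g h)

/-- The element `{(g,g)}` of `G ⊗^q G`. -/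
def dmk (q : ℕ) (g : G) : tensorSquare G q := PresentedGroup.of (Gen.d g)

/-- `∇^q(G)`, the normal closure of the elements `g ⊗ g` in `G ⊗^q G`. -/
def nabla (q : ℕ) : Subgroup (tensorSquare G q) :=
  Subgroup.normalClosure {x | ∃ g : G, x = tmk G q g g}

instance (q : ℕ) : (nabla G q).Normal := Subgroup.normalClosure_normal

/-- The exterior square modulo `q`, `G ∧^q G = (G ⊗^q G)/∇^q(G)`. -/
def extSquare (q : ℕ) : Type := tensorSquare G q ⧸ nabla G q

instance (q : ℕ) : Group (extSquare G q) := by unfold extSquare; infer_instance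

/-- The element `g ∧ h` of `G ∧^q G`. -/
def wmk (q : ℕ) (g h : G) : extSquare G q := QuotientGroup.mk (tmk G q g h)

/-- The image of the symbol `{(g,g)}` in `G ∧^q G`. -/
def dwmk (q : ℕ) (g : G) : extSquare G q := QuotientGroup.mk (dmk G q g)

/-- The exterior centre variant `Z^∧_q(G) = {g : g ∧ h = 1 for all h}` (as a set). -/
def Zext (q : ℕ) : Set G := {g | ∀ h : G, wmk G q g h = 1}

/-- `E^∧_q(G) = {g ∈ Z^∧_q(G) : {(g,g)} = 1 in G ∧^q G}` (as a set); for `q = 0`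
the second condition is automatic, so `E^∧_0(G) = Z^∧(G)`. -/
def Eext (q : ℕ) : Set G := {g | (∀ h : G, wmk G q g h = 1) ∧ dwmk G q g = 1}

/-- The subgroup `G^q[G,G]` generated by all `q`-th powers and all commutators. -/
def qPowComm (q : ℕ) : Subgroup G :=
  Subgroup.closure ({x | ∃ g : G, x = g ^ q} ∪ {x | ∃ a b : G, x = a * b * a⁻¹ * b⁻¹})

theorem pow_mem_qPowComm (q : ℕ) (g : G) : g ^ q ∈ qPowComm G q :=
  Subgroup.subset_closure (Or.inl ⟨g, rfl⟩)

theorem commutator_mem_qPowComm (q : ℕ) (a b : G) :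
    a * b * a⁻¹ * b⁻¹ ∈ qPowComm G q :=
  Subgroup.subset_closure (Or.inr ⟨a, b, rfl⟩)

open scoped commutatorElement in
theorem mem_commutator (a b : G) : ⁅a, b⁆ ∈ commutator G :=
  Subgroup.commutator_mem_commutator (Subgroup.mem_top a) (Subgroup.mem_top b)

/-- `M₀^q(G)`: the subgroup of `G ∧^q G` generated by the `x ∧ y` with `[x,y] = 1`.
(It is contained in the `q`-Schur multiplier `M^q(G)`.) -/
def M0 (q : ℕ) : Subgroup (extSquare G q) :=
  Subgroup.closure {x | ∃ a b : G, a * b = b * a ∧ x = wmk G q a b}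

/-- `M̂₀^q(G)`: the subgroup of `G ∧^q G` generated by the `x ∧ y` with `[x,y] = 1`
together with the `{(g,g)}` with `g^q = 1`. -/
def M0hat (q : ℕ) : Subgroup (extSquare G q) :=
  Subgroup.closure
    ({x | ∃ a b : G, a * b = b * a ∧ x = wmk G q a b} ∪
     {x | ∃ g : G, g ^ q = 1 ∧ x = dwmk G q g})

/-- A group `Q` is capable if `Q ≅ E/Z(E)` for some group `E`. -/
def Capable (Q : Type) [Group Q] : Prop :=
  ∃ (E : Type) (_ : Group E), Nonempty (Q ≃* E ⧸ Subgroup.center E)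

section Aux

variable {G : Type} [Group G] (q : ℕ)

lemma mk_rels_eq_one {r : FreeGroup (Gen G)} (hr : r ∈ rels G q) :
    (PresentedGroup.mk (rels G q) r : tensorSquare G q) = 1 :=
  (QuotientGroup.eq_one_iff r).2 (Subgroup.subset_normalClosure hr)

lemma mk_T (g h : G) : (PresentedGroup.mk (rels G q) (T G g h) : tensorSquare G q)
    = tmk G q g h := rfl

lemma mk_D (g : G) : (PresentedGroup.mk (rels G q) (D G g) : tensorSquare G q)
    = dmk G q g := rfl

lemma trel1 (g g₁ h : G) :
    tmk G q (g * g₁) h = tmk G q (g * g₁ * g⁻¹) (g * h * g⁻¹) * tmk G q g h := by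
  have hm : (T G (g * g₁) h * (T G (g * g₁ * g⁻¹) (g * h * g⁻¹) * T G g h)⁻¹) ∈ rels G q := by
    simp only [rels, Set.mem_union, Set.mem_setOf_eq]
    exact Or.inl (Or.inl (Or.inl (Or.inl (Or.inl (Or.inl ⟨g, g₁, h, rfl⟩)))))
  have := mk_rels_eq_one q hm
  rw [map_mul, map_inv, map_mul, mul_inv_eq_one] at this
  simp only [mk_T] at this
  exact this

lemma trel2 (g h h₁ : G) :
    tmk G q g (h * h₁) = tmk G q g h * tmk G q (h * g * h⁻¹) (h * h₁ * h⁻¹) := by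
  have hm : (T G g (h * h₁) * (T G g h * T G (h * g * h⁻¹) (h * h₁ * h⁻¹))⁻¹) ∈ rels G q := by
    simp only [rels, Set.mem_union, Set.mem_setOf_eq]
    exact Or.inl (Or.inl (Or.inl (Or.inl (Or.inl (Or.inr ⟨g, h, h₁, rfl⟩)))))
  have := mk_rels_eq_one q hm
  rw [map_mul, map_inv, map_mul, mul_inv_eq_one] at this
  simp only [mk_T] at this
  exact this

lemma trel3 (g g₁ h₁ : G) :
    dmk G q g * tmk G q g₁ h₁ * (dmk G q g)⁻¹
      = tmk G q (g ^ q * g₁ * (g ^ q)⁻¹) (g ^ q * h₁ * (g ^ q)⁻¹) := by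
  have hm : (D G g * T G g₁ h₁ * (D G g)⁻¹ *
      (T G (g ^ q * g₁ * (g ^ q)⁻¹) (g ^ q * h₁ * (g ^ q)⁻¹))⁻¹) ∈ rels G q := by
    simp only [rels, Set.mem_union, Set.mem_setOf_eq]
    exact Or.inl (Or.inl (Or.inl (Or.inl (Or.inr ⟨g, g₁, h₁, rfl⟩))))
  have := mk_rels_eq_one q hm
  rw [map_mul, map_inv, map_mul, map_mul, map_inv, mul_inv_eq_one] at this
  simp only [mk_T, mk_D] at this
  exact this

/-- The image of `relProd` in the tensor square. -/
def tRelProd (g g₁ : G) : tensorSquare G q :=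
  PresentedGroup.mk (rels G q) (relProd G q g g₁)

lemma tRelProd_eq (g g₁ : G) :
    tRelProd q g g₁ = ((List.range (q - 1)).map (fun j =>
      tmk G q g⁻¹ ((g ^ ((1 : ℤ) - (q : ℤ) + (j + 1 : ℕ)) * g₁ *
        (g ^ ((1 : ℤ) - (q : ℤ) + (j + 1 : ℕ)))⁻¹) ^ (j + 1)))).prod := by
  unfold tRelProd relProd
  rw [map_list_prod, List.map_map]
  rfl

lemma trel4 (g g₁ : G) :
    dmk G q (g * g₁) = dmk G q g * tRelProd q g g₁ * dmk G q g₁ := by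
  have hm : (D G (g * g₁) * (D G g * relProd G q g g₁ * D G g₁)⁻¹) ∈ rels G q := by
    simp only [rels, Set.mem_union, Set.mem_setOf_eq]
    exact Or.inl (Or.inl (Or.inl (Or.inr ⟨g, g₁, rfl⟩)))
  have := mk_rels_eq_one q hm
  rw [map_mul, map_inv, map_mul, map_mul, mul_inv_eq_one] at this
  simp only [mk_T, mk_D] at this
  exact this

lemma trel5 (g g₁ : G) :
    dmk G q g * dmk G q g₁ * (dmk G q g)⁻¹ * (dmk G q g₁)⁻¹ = tmk G q (g ^ q) (g₁ ^ q) := by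
  have hm : (D G g * D G g₁ * (D G g)⁻¹ * (D G g₁)⁻¹ * (T G (g ^ q) (g₁ ^ q))⁻¹) ∈ rels G q := by
    simp only [rels, Set.mem_union, Set.mem_setOf_eq]
    exact Or.inl (Or.inl (Or.inr ⟨g, g₁, rfl⟩))
  have := mk_rels_eq_one q hm
  rw [map_mul, map_inv, map_mul, map_mul, map_inv, map_mul, map_inv, mul_inv_eq_one] at this
  simp only [mk_T, mk_D] at this
  exact this

lemma trel6 (g h : G) :
    dmk G q (g * h * g⁻¹ * h⁻¹) = (tmk G q g h) ^ q := by
  have hm : (D G (g * h * g⁻¹ * h⁻¹) * ((T G g h) ^ q)⁻¹) ∈ rels G q := by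
    simp only [rels, Set.mem_union, Set.mem_setOf_eq]
    exact Or.inl (Or.inr ⟨g, h, rfl⟩)
  have := mk_rels_eq_one q hm
  rw [map_mul, map_inv, map_pow, mul_inv_eq_one] at this
  simp only [mk_T, mk_D] at this
  exact this

lemma trel7 (hq : q = 0) (g : G) : dmk G q g = 1 := by
  have hm : (D G g) ∈ rels G q := by
    simp only [rels, Set.mem_union, Set.mem_setOf_eq]
    exact Or.inr ⟨hq, g, rfl⟩
  have := mk_rels_eq_one q hm
  simp only [mk_D] at this
  exact this

lemma tmk_one_right (g : G) : tmk G q g 1 = 1 := by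
  have := trel2 q g 1 1
  simp only [mul_one, one_mul, inv_one] at this
  -- tmk g 1 = tmk g 1 * tmk g 1  (after simplifying 1*g*1⁻¹ = g, 1*1*1⁻¹ = 1)
  have h2 : tmk G q g 1 = tmk G q g 1 * tmk G q g 1 := by
    simpa using this
  exact left_eq_mul.mp h2

lemma tmk_one_left (h : G) : tmk G q 1 h = 1 := by
  have := trel1 q 1 1 h
  simp only [mul_one, one_mul, inv_one] at this
  have h2 : tmk G q 1 h = tmk G q 1 h * tmk G q 1 h := by simpa using this
  exact left_eq_mul.mp h2

end Aux

section Conj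

variable {G : Type} [Group G] (q : ℕ)

lemma tswap (x y a b : G) :
    tmk G q (x*y*a*y⁻¹*x⁻¹) (x*y*b*y⁻¹*x⁻¹) * (tmk G q x y * tmk G q (y*x*y⁻¹) (y*b*y⁻¹))
    = tmk G q x y * (tmk G q (y*x*a*x⁻¹*y⁻¹) (y*x*b*x⁻¹*y⁻¹) * tmk G q (y*x*y⁻¹) (y*b*y⁻¹)) := by
  have h1 : tmk G q (x*a) (y*b)
      = tmk G q (x*a*x⁻¹) (x*y*x⁻¹) *
        (tmk G q (x*y*a*y⁻¹*x⁻¹) (x*y*b*y⁻¹*x⁻¹) *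
         (tmk G q x y * tmk G q (y*x*y⁻¹) (y*b*y⁻¹))) := by
    rw [trel1 q x a (y*b)]
    rw [show x*(y*b)*x⁻¹ = (x*y*x⁻¹) * (x*b*x⁻¹) by group]
    rw [trel2 q (x*a*x⁻¹) (x*y*x⁻¹) (x*b*x⁻¹)]
    rw [trel2 q x y b]
    rw [show (x*y*x⁻¹)*(x*a*x⁻¹)*(x*y*x⁻¹)⁻¹ = x*y*a*y⁻¹*x⁻¹ by group,
        show (x*y*x⁻¹)*(x*b*x⁻¹)*(x*y*x⁻¹)⁻¹ = x*y*b*y⁻¹*x⁻¹ by group]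
    simp only [mul_assoc]
  have h2 : tmk G q (x*a) (y*b)
      = tmk G q (x*a*x⁻¹) (x*y*x⁻¹) *
        (tmk G q x y *
         (tmk G q (y*x*a*x⁻¹*y⁻¹) (y*x*b*x⁻¹*y⁻¹) * tmk G q (y*x*y⁻¹) (y*b*y⁻¹))) := by
    rw [trel2 q (x*a) y b, trel1 q x a y]
    rw [show y*(x*a)*y⁻¹ = (y*x*y⁻¹)*(y*a*y⁻¹) by group]
    rw [trel1 q (y*x*y⁻¹) (y*a*y⁻¹) (y*b*y⁻¹)]
    rw [show (y*x*y⁻¹)*(y*a*y⁻¹)*(y*x*y⁻¹)⁻¹ = y*x*a*x⁻¹*y⁻¹ by group,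
        show (y*x*y⁻¹)*(y*b*y⁻¹)*(y*x*y⁻¹)⁻¹ = y*x*b*x⁻¹*y⁻¹ by group]
    simp only [mul_assoc]
  exact mul_left_cancel (h1.symm.trans h2)

lemma conj_tmk (x y c d : G) :
    tmk G q x y * tmk G q c d * (tmk G q x y)⁻¹
      = tmk G q ((x*y*x⁻¹*y⁻¹)*c*(x*y*x⁻¹*y⁻¹)⁻¹) ((x*y*x⁻¹*y⁻¹)*d*(x*y*x⁻¹*y⁻¹)⁻¹) := by
  have key := tswap q x y (x⁻¹*y⁻¹*c*y*x) (x⁻¹*y⁻¹*d*y*x)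
  rw [show y*x*(x⁻¹*y⁻¹*c*y*x)*x⁻¹*y⁻¹ = c by group,
      show y*x*(x⁻¹*y⁻¹*d*y*x)*x⁻¹*y⁻¹ = d by group,
      show x*y*(x⁻¹*y⁻¹*c*y*x)*y⁻¹*x⁻¹ = (x*y*x⁻¹*y⁻¹)*c*(x*y*x⁻¹*y⁻¹)⁻¹ by group,
      show x*y*(x⁻¹*y⁻¹*d*y*x)*y⁻¹*x⁻¹ = (x*y*x⁻¹*y⁻¹)*d*(x*y*x⁻¹*y⁻¹)⁻¹ by group] at key
  -- key : tmk (Kc) (Kd) * (tmk x y * W) = tmk x y * (tmk c d * W)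
  -- cancel W on the right
  have key2 : tmk G q ((x*y*x⁻¹*y⁻¹)*c*(x*y*x⁻¹*y⁻¹)⁻¹) ((x*y*x⁻¹*y⁻¹)*d*(x*y*x⁻¹*y⁻¹)⁻¹)
      * tmk G q x y = tmk G q x y * tmk G q c d := by
    have := key
    rw [← mul_assoc, ← mul_assoc] at this
    exact mul_right_cancel this
  rw [← key2]
  group

end Conj

section Ext

variable {G : Type} [Group G] (q : ℕ)

/-- The quotient map `G ⊗^q G → G ∧^q G`. -/
def emk : tensorSquare G q →* extSquare G q := QuotientGroup.mk' (nabla G q)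

lemma emk_tmk (g h : G) : emk q (tmk G q g h) = wmk G q g h := rfl

lemma emk_dmk (g : G) : emk q (dmk G q g) = dwmk G q g := rfl

lemma wmk_self (g : G) : wmk G q g g = 1 :=
  (QuotientGroup.eq_one_iff _).2 (Subgroup.subset_normalClosure ⟨g, rfl⟩)

lemma erel1 (g g₁ h : G) :
    wmk G q (g * g₁) h = wmk G q (g * g₁ * g⁻¹) (g * h * g⁻¹) * wmk G q g h := by
  simpa [emk_tmk] using congrArg (emk (G := G) q) (trel1 q g g₁ h)

lemma erel2 (g h h₁ : G) :
    wmk G q g (h * h₁) = wmk G q g h * wmk G q (h * g * h⁻¹) (h * h₁ * h⁻¹) := by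
  simpa [emk_tmk] using congrArg (emk (G := G) q) (trel2 q g h h₁)

lemma erel3 (g g₁ h₁ : G) :
    dwmk G q g * wmk G q g₁ h₁ * (dwmk G q g)⁻¹
      = wmk G q (g ^ q * g₁ * (g ^ q)⁻¹) (g ^ q * h₁ * (g ^ q)⁻¹) := by
  simpa [emk_tmk, emk_dmk] using congrArg (emk (G := G) q) (trel3 q g g₁ h₁)

/-- The image of `relProd` in the exterior square. -/
def eRelProd (g g₁ : G) : extSquare G q := emk q (tRelProd q g g₁)

lemma eRelProd_eq (g g₁ : G) :
    eRelProd q g g₁ = ((List.range (q - 1)).map (fun j =>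
      wmk G q g⁻¹ ((g ^ ((1 : ℤ) - (q : ℤ) + (j + 1 : ℕ)) * g₁ *
        (g ^ ((1 : ℤ) - (q : ℤ) + (j + 1 : ℕ)))⁻¹) ^ (j + 1)))).prod := by
  unfold eRelProd
  rw [tRelProd_eq, map_list_prod, List.map_map]
  rfl

lemma erel4 (g g₁ : G) :
    dwmk G q (g * g₁) = dwmk G q g * eRelProd q g g₁ * dwmk G q g₁ := by
  simpa [emk_tmk, emk_dmk, eRelProd] using congrArg (emk (G := G) q) (trel4 q g g₁)

lemma erel5 (g g₁ : G) :
    dwmk G q g * dwmk G q g₁ * (dwmk G q g)⁻¹ * (dwmk G q g₁)⁻¹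
      = wmk G q (g ^ q) (g₁ ^ q) := by
  simpa [emk_tmk, emk_dmk] using congrArg (emk (G := G) q) (trel5 q g g₁)

lemma erel6 (g h : G) :
    dwmk G q (g * h * g⁻¹ * h⁻¹) = (wmk G q g h) ^ q := by
  simpa [emk_tmk, emk_dmk] using congrArg (emk (G := G) q) (trel6 q g h)

lemma erel7 (hq : q = 0) (g : G) : dwmk G q g = 1 := by
  simpa [emk_dmk] using congrArg (emk (G := G) q) (trel7 q hq g)

lemma wmk_one_right (g : G) : wmk G q g 1 = 1 := by
  simpa [emk_tmk] using congrArg (emk (G := G) q) (tmk_one_right q g)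

lemma wmk_one_left (h : G) : wmk G q 1 h = 1 := by
  simpa [emk_tmk] using congrArg (emk (G := G) q) (tmk_one_left q h)

lemma econj (x y c d : G) :
    wmk G q x y * wmk G q c d * (wmk G q x y)⁻¹
      = wmk G q ((x*y*x⁻¹*y⁻¹)*c*(x*y*x⁻¹*y⁻¹)⁻¹) ((x*y*x⁻¹*y⁻¹)*d*(x*y*x⁻¹*y⁻¹)⁻¹) := by
  simpa [emk_tmk] using congrArg (emk (G := G) q) (conj_tmk q x y c d)

/-- Generation of the exterior square by the canonical generators. -/
lemma extSquare_induction {C : extSquare G q → Prop} (h1 : C 1)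
    (ht : ∀ g h : G, C (wmk G q g h)) (hd : ∀ g : G, C (dwmk G q g))
    (hinv : ∀ x, C x → C x⁻¹) (hmul : ∀ x y, C x → C y → C (x * y)) :
    ∀ x, C x := by
  intro x
  obtain ⟨y, rfl⟩ := QuotientGroup.mk'_surjective (nabla G q) x
  induction y using PresentedGroup.induction_on with
  | H z =>
    induction z using FreeGroup.induction_on with
    | C1 => exact h1
    | of w =>
      cases w with
      | t g h => exact ht g h
      | d g => exact hd g
    | inv_of w hw =>
      have : (QuotientGroup.mk' (nabla G q)) ((PresentedGroup.mk (rels G q)) (FreeGroup.of w)⁻¹)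
          = ((QuotientGroup.mk' (nabla G q)) ((PresentedGroup.mk (rels G q)) (FreeGroup.of w)))⁻¹ := by
        exact (congrArg (QuotientGroup.mk' (nabla G q)) (map_inv (PresentedGroup.mk (rels G q))
          (FreeGroup.of w))).trans (map_inv (QuotientGroup.mk' (nabla G q)) _)
      rw [this]
      exact hinv _ hw
    | mul u v hu hv =>
      have : (QuotientGroup.mk' (nabla G q)) ((PresentedGroup.mk (rels G q)) (u * v))
          = (QuotientGroup.mk' (nabla G q)) ((PresentedGroup.mk (rels G q)) u) *
            (QuotientGroup.mk' (nabla G q)) ((PresentedGroup.mk (rels G q)) v) := by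
        exact (congrArg (QuotientGroup.mk' (nabla G q)) (map_mul (PresentedGroup.mk (rels G q))
          u v)).trans (map_mul (QuotientGroup.mk' (nabla G q)) _ _)
      rw [this]
      exact hmul _ _ hu hv

end Ext

section Normality

variable {G : Type} [Group G] (q : ℕ)

/-- The generating set of `M0hat`. -/
def Sgen (q : ℕ) : Set (extSquare G q) :=
  {x | ∃ a b : G, a * b = b * a ∧ x = wmk G q a b} ∪
  {x | ∃ g : G, g ^ q = 1 ∧ x = dwmk G q g}

lemma M0hat_eq_closure : M0hat G q = Subgroup.closure (Sgen q) := rfl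

lemma wmk_mem_M0hat {a b : G} (h : a * b = b * a) : wmk G q a b ∈ M0hat G q :=
  Subgroup.subset_closure (Or.inl ⟨a, b, h, rfl⟩)

lemma dwmk_mem_M0hat {g : G} (h : g ^ q = 1) : dwmk G q g ∈ M0hat G q :=
  Subgroup.subset_closure (Or.inr ⟨g, h, rfl⟩)

lemma dwmk_comm_wmk {x : G} (hx : x ^ q = 1) (c d : G) :
    dwmk G q x * wmk G q c d = wmk G q c d * dwmk G q x := by
  have h := erel3 q x c d
  rw [hx] at h
  simp only [one_mul, inv_one, mul_one] at h
  exact mul_inv_eq_iff_eq_mul.mp h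

lemma dwmk_comm_dwmk {x : G} (hx : x ^ q = 1) (g : G) :
    dwmk G q g * dwmk G q x = dwmk G q x * dwmk G q g := by
  have h := erel5 q g x
  rw [hx, wmk_one_right] at h
  have h2 : dwmk G q g * dwmk G q x * (dwmk G q g)⁻¹ = dwmk G q x := by
    rw [← mul_inv_eq_one]
    simpa [mul_assoc] using h
  exact mul_inv_eq_iff_eq_mul.mp h2

lemma econj_inv (x y c d : G) :
    (wmk G q x y)⁻¹ * wmk G q c d * wmk G q x y
      = wmk G q ((x*y*x⁻¹*y⁻¹)⁻¹*c*(x*y*x⁻¹*y⁻¹)) ((x*y*x⁻¹*y⁻¹)⁻¹*d*(x*y*x⁻¹*y⁻¹)) := by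
  have h := econj q x y ((x*y*x⁻¹*y⁻¹)⁻¹*c*(x*y*x⁻¹*y⁻¹)) ((x*y*x⁻¹*y⁻¹)⁻¹*d*(x*y*x⁻¹*y⁻¹))
  rw [show (x*y*x⁻¹*y⁻¹)*((x*y*x⁻¹*y⁻¹)⁻¹*c*(x*y*x⁻¹*y⁻¹))*(x*y*x⁻¹*y⁻¹)⁻¹ = c by group,
      show (x*y*x⁻¹*y⁻¹)*((x*y*x⁻¹*y⁻¹)⁻¹*d*(x*y*x⁻¹*y⁻¹))*(x*y*x⁻¹*y⁻¹)⁻¹ = d by group] at h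
  rw [← h]
  group

lemma erel3_inv (g a b : G) :
    (dwmk G q g)⁻¹ * wmk G q a b * dwmk G q g
      = wmk G q ((g ^ q)⁻¹ * a * g ^ q) ((g ^ q)⁻¹ * b * g ^ q) := by
  have h := erel3 q g ((g ^ q)⁻¹ * a * g ^ q) ((g ^ q)⁻¹ * b * g ^ q)
  rw [show g ^ q * ((g ^ q)⁻¹ * a * g ^ q) * (g ^ q)⁻¹ = a by group,
      show g ^ q * ((g ^ q)⁻¹ * b * g ^ q) * (g ^ q)⁻¹ = b by group] at h
  rw [← h]
  group

/-- Conjugates of `Sgen` generators by generators of the exterior square stay in `M0hat`. -/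
lemma conj_gen_mem :
    ∀ u : extSquare G q, ((∀ s ∈ Sgen (G := G) q, u * s * u⁻¹ ∈ M0hat G q) ∧
      (∀ s ∈ Sgen (G := G) q, u⁻¹ * s * u ∈ M0hat G q)) := by
  have key : ∀ u : extSquare G q,
      (∀ s ∈ Sgen (G := G) q, u * s * u⁻¹ ∈ M0hat G q) →
      (∀ n ∈ M0hat G q, u * n * u⁻¹ ∈ M0hat G q) := by
    intro u hu n hn
    refine Subgroup.closure_induction (p := fun n _ => u * n * u⁻¹ ∈ M0hat G q)
      (fun x hx => hu x hx) (by simpa using one_mem _) ?_ ?_ hn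
    · intro a b _ _ ha hb
      have : u * (a * b) * u⁻¹ = (u * a * u⁻¹) * (u * b * u⁻¹) := by group
      rw [this]; exact mul_mem ha hb
    · intro a _ ha
      have : u * a⁻¹ * u⁻¹ = (u * a * u⁻¹)⁻¹ := by group
      rw [this]; exact inv_mem ha
  -- check the generators
  intro u
  induction u using extSquare_induction with
  | h1 => constructor <;> intro s hs <;> simpa [M0hat_eq_closure] using Subgroup.subset_closure hs
  | ht c d =>
    have fwd : ∀ s ∈ Sgen (G := G) q, wmk G q c d * s * (wmk G q c d)⁻¹ ∈ M0hat G q := by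
      rintro s (⟨a, b, hab, rfl⟩ | ⟨x, hx, rfl⟩)
      · rw [econj]
        refine wmk_mem_M0hat q ?_
        have h1 : (c*d*c⁻¹*d⁻¹)*a*(c*d*c⁻¹*d⁻¹)⁻¹*((c*d*c⁻¹*d⁻¹)*b*(c*d*c⁻¹*d⁻¹)⁻¹)
            = (c*d*c⁻¹*d⁻¹)*(a*b)*(c*d*c⁻¹*d⁻¹)⁻¹ := by group
        have h2 : (c*d*c⁻¹*d⁻¹)*b*(c*d*c⁻¹*d⁻¹)⁻¹*((c*d*c⁻¹*d⁻¹)*a*(c*d*c⁻¹*d⁻¹)⁻¹)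
            = (c*d*c⁻¹*d⁻¹)*(b*a)*(c*d*c⁻¹*d⁻¹)⁻¹ := by group
        rw [h1, h2, hab]
      · rw [← dwmk_comm_wmk q hx c d]
        simpa using dwmk_mem_M0hat q hx
    have bwd : ∀ s ∈ Sgen (G := G) q, (wmk G q c d)⁻¹ * s * wmk G q c d ∈ M0hat G q := by
      rintro s (⟨a, b, hab, rfl⟩ | ⟨x, hx, rfl⟩)
      · rw [econj_inv]
        refine wmk_mem_M0hat q ?_
        have h1 : (c*d*c⁻¹*d⁻¹)⁻¹*a*(c*d*c⁻¹*d⁻¹)*((c*d*c⁻¹*d⁻¹)⁻¹*b*(c*d*c⁻¹*d⁻¹))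
            = (c*d*c⁻¹*d⁻¹)⁻¹*(a*b)*(c*d*c⁻¹*d⁻¹) := by group
        have h2 : (c*d*c⁻¹*d⁻¹)⁻¹*b*(c*d*c⁻¹*d⁻¹)*((c*d*c⁻¹*d⁻¹)⁻¹*a*(c*d*c⁻¹*d⁻¹))
            = (c*d*c⁻¹*d⁻¹)⁻¹*(b*a)*(c*d*c⁻¹*d⁻¹) := by group
        rw [h1, h2, hab]
      · rw [mul_assoc, dwmk_comm_wmk q hx c d, ← mul_assoc]
        simpa using dwmk_mem_M0hat q hx
    exact ⟨fwd, bwd⟩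
  | hd g =>
    have fwd : ∀ s ∈ Sgen (G := G) q, dwmk G q g * s * (dwmk G q g)⁻¹ ∈ M0hat G q := by
      rintro s (⟨a, b, hab, rfl⟩ | ⟨x, hx, rfl⟩)
      · rw [erel3]
        refine wmk_mem_M0hat q ?_
        have h1 : g^q*a*(g^q)⁻¹*(g^q*b*(g^q)⁻¹) = g^q*(a*b)*(g^q)⁻¹ := by group
        have h2 : g^q*b*(g^q)⁻¹*(g^q*a*(g^q)⁻¹) = g^q*(b*a)*(g^q)⁻¹ := by group
        rw [h1, h2, hab]
      · rw [dwmk_comm_dwmk q hx g]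
        simpa using dwmk_mem_M0hat q hx
    have bwd : ∀ s ∈ Sgen (G := G) q, (dwmk G q g)⁻¹ * s * dwmk G q g ∈ M0hat G q := by
      rintro s (⟨a, b, hab, rfl⟩ | ⟨x, hx, rfl⟩)
      · rw [erel3_inv]
        refine wmk_mem_M0hat q ?_
        have h1 : (g^q)⁻¹*a*g^q*((g^q)⁻¹*b*g^q) = (g^q)⁻¹*(a*b)*g^q := by group
        have h2 : (g^q)⁻¹*b*g^q*((g^q)⁻¹*a*g^q) = (g^q)⁻¹*(b*a)*g^q := by group
        rw [h1, h2, hab]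
      · rw [mul_assoc, ← dwmk_comm_dwmk q hx g, ← mul_assoc]
        simpa using dwmk_mem_M0hat q hx
    exact ⟨fwd, bwd⟩
  | hinv x hx =>
    refine ⟨?_, ?_⟩ <;> intro s hs
    · simpa using hx.2 s hs
    · simpa using hx.1 s hs
  | hmul x y hx hy =>
    have kx1 := key x hx.1
    have kx2 := key x⁻¹ (by simpa using hx.2)
    have ky1 := key y hy.1
    have ky2 := key y⁻¹ (by simpa using hy.2)
    refine ⟨?_, ?_⟩ <;> intro s hs
    · have h1 : (x*y)*s*(x*y)⁻¹ = x*(y*s*y⁻¹)*x⁻¹ := by group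
      rw [h1]
      exact kx1 _ (ky1 _ (Subgroup.subset_closure hs))
    · have h1 : (x*y)⁻¹*s*(x*y) = y⁻¹*(x⁻¹*s*x)*y := by group
      rw [h1]
      have := ky2 _ (kx2 _ (Subgroup.subset_closure hs))
      simpa using this

instance m0hat_normal : (M0hat G q).Normal := by
  constructor
  intro n hn g
  have key : (∀ s ∈ Sgen (G := G) q, g * s * g⁻¹ ∈ M0hat G q) →
      g * n * g⁻¹ ∈ M0hat G q := by
    intro hg
    refine Subgroup.closure_induction (p := fun n _ => g * n * g⁻¹ ∈ M0hat G q)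
      (fun x hx => hg x hx) (by simpa using one_mem _) ?_ ?_ hn
    · intro a b _ _ ha hb
      have : g * (a * b) * g⁻¹ = (g * a * g⁻¹) * (g * b * g⁻¹) := by group
      rw [this]; exact mul_mem ha hb
    · intro a _ ha
      have : g * a⁻¹ * g⁻¹ = (g * a * g⁻¹)⁻¹ := by group
      rw [this]; exact inv_mem ha
  exact key ((conj_gen_mem q g).1)

end Normality

section Curly

variable {G : Type} [Group G] (q : ℕ)

/-- The quotient map `G ∧^q G → (G ∧^q G)/M̂₀^q(G)`. -/
def cmk : extSquare G q →* extSquare G q ⧸ M0hat G q := QuotientGroup.mk' (M0hat G q)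

lemma cmk_wmk_eq_one {a b : G} (h : a * b = b * a) : cmk q (wmk G q a b) = 1 :=
  (QuotientGroup.eq_one_iff _).2 (wmk_mem_M0hat q h)

lemma cmk_dwmk_eq_one {g : G} (h : g ^ q = 1) : cmk q (dwmk G q g) = 1 :=
  (QuotientGroup.eq_one_iff _).2 (dwmk_mem_M0hat q h)

lemma cmk_wmk_right_central (g h z : G) (hz : z ∈ Subgroup.center G) :
    cmk q (wmk G q (g * z) h) = cmk q (wmk G q g h) := by
  have h1 : g * z * g⁻¹ = z := by
    rw [Subgroup.mem_center_iff.mp hz g]; group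
  rw [erel1 q g z h, h1, map_mul, cmk_wmk_eq_one q
    (((Subgroup.mem_center_iff.mp hz) (g * h * g⁻¹))).symm, one_mul]

lemma cmk_wmk_snd_central (g h z : G) (hz : z ∈ Subgroup.center G) :
    cmk q (wmk G q g (h * z)) = cmk q (wmk G q g h) := by
  have h1 : h * z * h⁻¹ = z := by
    rw [Subgroup.mem_center_iff.mp hz h]; group
  rw [erel2 q g h z, h1, map_mul, cmk_wmk_eq_one q
    (Subgroup.mem_center_iff.mp hz (h * g * h⁻¹)), mul_one]

lemma cmk_eRelProd_central (g z : G) (hz : z ∈ Subgroup.center G) :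
    cmk q (eRelProd q g z) = 1 := by
  rw [eRelProd_eq, map_list_prod]
  apply List.prod_eq_one
  intro x hx
  rw [List.map_map, List.mem_map] at hx
  obtain ⟨j, -, rfl⟩ := hx
  simp only [Function.comp_apply]
  have h1 : g ^ ((1 : ℤ) - (q : ℤ) + (j + 1 : ℕ)) * z *
      (g ^ ((1 : ℤ) - (q : ℤ) + (j + 1 : ℕ)))⁻¹ = z := by
    rw [Subgroup.mem_center_iff.mp hz (g ^ ((1 : ℤ) - (q : ℤ) + (j + 1 : ℕ)))]
    group
  rw [h1]
  exact cmk_wmk_eq_one q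
    (Subgroup.mem_center_iff.mp (pow_mem hz (j + 1)) g⁻¹)

lemma cmk_dwmk_central (g z : G) (hz : z ∈ Subgroup.center G) (hzq : z ^ q = 1) :
    cmk q (dwmk G q (g * z)) = cmk q (dwmk G q g) := by
  rw [erel4 q g z, map_mul, map_mul, cmk_eRelProd_central q g z hz, mul_one,
    cmk_dwmk_eq_one q hzq, mul_one]

variable (Z : Subgroup G) [Z.Normal]

lemma mem_Z_center (hZ : (Z : Set G) = {g | g ∈ Subgroup.center G ∧ g ^ q = 1})
    {z : G} (h : z ∈ Z) : z ∈ Subgroup.center G := by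
  have : z ∈ {g | g ∈ Subgroup.center G ∧ g ^ q = 1} := hZ ▸ h
  exact this.1

lemma mem_Z_pow (hZ : (Z : Set G) = {g | g ∈ Subgroup.center G ∧ g ^ q = 1})
    {z : G} (h : z ∈ Z) : z ^ q = 1 := by
  have : z ∈ {g | g ∈ Subgroup.center G ∧ g ^ q = 1} := hZ ▸ h
  exact this.2

lemma cmk_wmk_indep (hZ : (Z : Set G) = {g | g ∈ Subgroup.center G ∧ g ^ q = 1})
    {a a' b b' : G} (ha : (a : G ⧸ Z) = a') (hb : (b : G ⧸ Z) = b') :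
    cmk q (wmk G q a b) = cmk q (wmk G q a' b') := by
  have hza : a⁻¹ * a' ∈ Z := QuotientGroup.eq.mp ha
  have hzb : b⁻¹ * b' ∈ Z := QuotientGroup.eq.mp hb
  have e1 : a' = a * (a⁻¹ * a') := by group
  have e2 : b' = b * (b⁻¹ * b') := by group
  rw [e1, e2, cmk_wmk_right_central q _ _ _ (mem_Z_center q Z hZ hza),
    cmk_wmk_snd_central q _ _ _ (mem_Z_center q Z hZ hzb)]

lemma cmk_dwmk_indep (hZ : (Z : Set G) = {g | g ∈ Subgroup.center G ∧ g ^ q = 1})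
    {a a' : G} (ha : (a : G ⧸ Z) = a') :
    cmk q (dwmk G q a) = cmk q (dwmk G q a') := by
  have hza : a⁻¹ * a' ∈ Z := QuotientGroup.eq.mp ha
  have e1 : a' = a * (a⁻¹ * a') := by group
  rw [e1, cmk_dwmk_central q _ _ (mem_Z_center q Z hZ hza) (mem_Z_pow q Z hZ hza)]

end Curly

section Phi

variable {G H : Type} [Group G] [Group H] (q : ℕ)
variable (ZH : Subgroup H) [ZH.Normal]

lemma coe_out (x : H ⧸ ZH) : ((Quotient.out x : H) : H ⧸ ZH) = x :=
  Quotient.out_eq' x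

/-- Generator images for the induced map on the `q`-tensor square. -/
noncomputable def phiGen (f : G →* H ⧸ ZH) : Gen G → extSquare H q ⧸ M0hat H q
  | Gen.t g h => cmk q (wmk H q (Quotient.out (f g)) (Quotient.out (f h)))
  | Gen.d g => cmk q (dwmk H q (Quotient.out (f g)))

lemma phiGen_t (hZH : (ZH : Set H) = {g | g ∈ Subgroup.center H ∧ g ^ q = 1})
    (f : G →* H ⧸ ZH) {g h : G} {a b : H}
    (hg : f g = ↑a) (hh : f h = ↑b) :
    phiGen q ZH f (Gen.t g h) = cmk q (wmk H q a b) := by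
  exact cmk_wmk_indep q ZH hZH ((coe_out ZH (f g)).trans hg)
    ((coe_out ZH (f h)).trans hh)

lemma phiGen_d (hZH : (ZH : Set H) = {g | g ∈ Subgroup.center H ∧ g ^ q = 1})
    (f : G →* H ⧸ ZH) {g : G} {a : H} (hg : f g = ↑a) :
    phiGen q ZH f (Gen.d g) = cmk q (dwmk H q a) := by
  exact cmk_dwmk_indep q ZH hZH ((coe_out ZH (f g)).trans hg)

theorem exists_Phi (hZH : (ZH : Set H) = {g | g ∈ Subgroup.center H ∧ g ^ q = 1})
    (f : G →* H ⧸ ZH) :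
    ∃ Φ : extSquare G q →* extSquare H q ⧸ M0hat H q,
      (∀ (g h : G) (a b : H), f g = ↑a → f h = ↑b →
         Φ (wmk G q g h) = cmk q (wmk H q a b)) ∧
      (∀ (g : G) (a : H), f g = ↑a → Φ (dwmk G q g) = cmk q (dwmk H q a)) := by
  have hrels : ∀ r ∈ rels G q, FreeGroup.lift (phiGen q ZH f) r = 1 := by
    intro r hr
    simp only [rels, Set.mem_union, Set.mem_setOf_eq] at hr
    rcases hr with ((((((⟨g, g₁, h, rfl⟩ | ⟨g, h, h₁, rfl⟩) | ⟨g, g₁, h₁, rfl⟩) |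
      ⟨g, g₁, rfl⟩) | ⟨g, g₁, rfl⟩) | ⟨g, h, rfl⟩) | ⟨hq0, g, rfl⟩)
    · -- relation (1)
      obtain ⟨a, ha⟩ : ∃ a : H, f g = ↑a := ⟨Quotient.out (f g), (coe_out ZH _).symm⟩
      obtain ⟨b, hb⟩ : ∃ b : H, f g₁ = ↑b := ⟨Quotient.out (f g₁), (coe_out ZH _).symm⟩
      obtain ⟨c, hc⟩ : ∃ c : H, f h = ↑c := ⟨Quotient.out (f h), (coe_out ZH _).symm⟩
      simp only [T, map_mul, map_inv, FreeGroup.lift_apply_of]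
      rw [phiGen_t q ZH hZH f (a := a * b) (b := c) (by simp [ha, hb]) hc,
          phiGen_t q ZH hZH f (a := a * b * a⁻¹) (b := a * c * a⁻¹)
            (by simp [ha, hb]) (by simp [ha, hc]),
          phiGen_t q ZH hZH f ha hc]
      rw [mul_inv_eq_one, ← map_mul]
      exact congrArg (cmk q) (erel1 q a b c)
    · -- relation (2)
      obtain ⟨a, ha⟩ : ∃ a : H, f g = ↑a := ⟨Quotient.out (f g), (coe_out ZH _).symm⟩
      obtain ⟨b, hb⟩ : ∃ b : H, f h = ↑b := ⟨Quotient.out (f h), (coe_out ZH _).symm⟩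
      obtain ⟨c, hc⟩ : ∃ c : H, f h₁ = ↑c := ⟨Quotient.out (f h₁), (coe_out ZH _).symm⟩
      simp only [T, map_mul, map_inv, FreeGroup.lift_apply_of]
      rw [phiGen_t q ZH hZH f (a := a) (b := b * c) ha (by simp [hb, hc]),
          phiGen_t q ZH hZH f ha hb,
          phiGen_t q ZH hZH f (a := b * a * b⁻¹) (b := b * c * b⁻¹)
            (by simp [ha, hb]) (by simp [hb, hc])]
      rw [mul_inv_eq_one, ← map_mul]
      exact congrArg (cmk q) (erel2 q a b c)
    · -- relation (3)
      obtain ⟨a, ha⟩ : ∃ a : H, f g = ↑a := ⟨Quotient.out (f g), (coe_out ZH _).symm⟩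
      obtain ⟨b, hb⟩ : ∃ b : H, f g₁ = ↑b := ⟨Quotient.out (f g₁), (coe_out ZH _).symm⟩
      obtain ⟨c, hc⟩ : ∃ c : H, f h₁ = ↑c := ⟨Quotient.out (f h₁), (coe_out ZH _).symm⟩
      simp only [T, D, map_mul, map_inv, FreeGroup.lift_apply_of]
      rw [phiGen_d q ZH hZH f ha, phiGen_t q ZH hZH f hb hc,
          phiGen_t q ZH hZH f (a := a ^ q * b * (a ^ q)⁻¹) (b := a ^ q * c * (a ^ q)⁻¹)
            (by simp [ha, hb]) (by simp [ha, hc])]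
      rw [mul_inv_eq_one, ← map_inv, ← map_mul, ← map_mul]
      exact congrArg (cmk q) (erel3 q a b c)
    · -- relation (4)
      obtain ⟨a, ha⟩ : ∃ a : H, f g = ↑a := ⟨Quotient.out (f g), (coe_out ZH _).symm⟩
      obtain ⟨b, hb⟩ : ∃ b : H, f g₁ = ↑b := ⟨Quotient.out (f g₁), (coe_out ZH _).symm⟩
      have hRP : FreeGroup.lift (phiGen q ZH f) (relProd G q g g₁)
          = cmk q (eRelProd q a b) := by
        unfold relProd
        rw [map_list_prod, List.map_map, eRelProd_eq, map_list_prod, List.map_map]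
        apply congrArg List.prod
        apply List.map_congr_left
        intro j _
        simp only [Function.comp_apply, T, FreeGroup.lift_apply_of]
        exact phiGen_t q ZH hZH f (a := a⁻¹)
          (b := (a ^ ((1 : ℤ) - (q : ℤ) + (j + 1 : ℕ)) * b *
            (a ^ ((1 : ℤ) - (q : ℤ) + (j + 1 : ℕ)))⁻¹) ^ (j + 1))
          (by simp [ha]) (by simp [ha, hb])
      simp only [D, map_mul, map_inv, FreeGroup.lift_apply_of]
      rw [phiGen_d q ZH hZH f (a := a * b) (by simp [ha, hb]),
          phiGen_d q ZH hZH f ha, phiGen_d q ZH hZH f hb, hRP]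
      rw [mul_inv_eq_one, ← map_mul, ← map_mul]
      exact congrArg (cmk q) (erel4 q a b)
    · -- relation (5)
      obtain ⟨a, ha⟩ : ∃ a : H, f g = ↑a := ⟨Quotient.out (f g), (coe_out ZH _).symm⟩
      obtain ⟨b, hb⟩ : ∃ b : H, f g₁ = ↑b := ⟨Quotient.out (f g₁), (coe_out ZH _).symm⟩
      simp only [T, D, map_mul, map_inv, FreeGroup.lift_apply_of]
      rw [phiGen_d q ZH hZH f ha, phiGen_d q ZH hZH f hb,
          phiGen_t q ZH hZH f (a := a ^ q) (b := b ^ q) (by simp [ha]) (by simp [hb])]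
      rw [mul_inv_eq_one, ← map_inv, ← map_inv, ← map_mul, ← map_mul, ← map_mul]
      exact congrArg (cmk q) (erel5 q a b)
    · -- relation (6)
      obtain ⟨a, ha⟩ : ∃ a : H, f g = ↑a := ⟨Quotient.out (f g), (coe_out ZH _).symm⟩
      obtain ⟨b, hb⟩ : ∃ b : H, f h = ↑b := ⟨Quotient.out (f h), (coe_out ZH _).symm⟩
      simp only [T, D, map_mul, map_inv, map_pow, FreeGroup.lift_apply_of]
      rw [phiGen_d q ZH hZH f (a := a * b * a⁻¹ * b⁻¹) (by simp [ha, hb]),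
          phiGen_t q ZH hZH f ha hb]
      rw [mul_inv_eq_one, ← map_pow]
      exact congrArg (cmk q) (erel6 q a b)
    · -- relation (7), q = 0
      obtain ⟨a, ha⟩ : ∃ a : H, f g = ↑a := ⟨Quotient.out (f g), (coe_out ZH _).symm⟩
      simp only [D, FreeGroup.lift_apply_of]
      rw [phiGen_d q ZH hZH f ha, erel7 q hq0 a, map_one]
  -- the homomorphism on the tensor square
  let Φ₀ : tensorSquare G q →* extSquare H q ⧸ M0hat H q := PresentedGroup.toGroup hrels
  have hΦ₀t : ∀ g h : G, Φ₀ (tmk G q g h) = phiGen q ZH f (Gen.t g h) := fun g h =>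
    PresentedGroup.toGroup.of hrels
  have hΦ₀d : ∀ g : G, Φ₀ (dmk G q g) = phiGen q ZH f (Gen.d g) := fun g =>
    PresentedGroup.toGroup.of hrels
  -- it kills ∇^q(G)
  have hnabla : nabla G q ≤ Φ₀.ker := by
    apply Subgroup.normalClosure_le_normal
    rintro x ⟨g, rfl⟩
    have : Φ₀ (tmk G q g g) = 1 := by
      rw [hΦ₀t, phiGen_t q ZH hZH f (a := Quotient.out (f g)) (b := Quotient.out (f g))
        (coe_out ZH _).symm (coe_out ZH _).symm, wmk_self, map_one]
    exact this
  refine ⟨QuotientGroup.lift (nabla G q) Φ₀ hnabla, ?_, ?_⟩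
  · intro g h a b hg hh
    have h2 : Φ₀ (tmk G q g h) = cmk q (wmk H q a b) := by
      rw [hΦ₀t, phiGen_t q ZH hZH f hg hh]
    exact (QuotientGroup.lift_mk' (nabla G q) hnabla (tmk G q g h)).trans h2
  · intro g a hg
    have h2 : Φ₀ (dmk G q g) = cmk q (dwmk H q a) := by
      rw [hΦ₀d, phiGen_d q ZH hZH f hg]
    exact (QuotientGroup.lift_mk' (nabla G q) hnabla (dmk G q g)).trans h2

end Phi


end QTensor

open QTensor in
/-- Invariance of the `q̂`-Bogomolov multiplier `B̂₀^q = M^q/M̂₀^q` under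
`q̂`-isoclinism.  Here `M^q(G) = ker ηG`, `M̂₀^q(G)` is generated by the
`x ∧ y` with `[x,y] = 1` together with the `{(g,g)}` with `g^q = 1`, and
`Ẑ_q(G) = {g ∈ Z(G) : g^q = 1}`. -/
theorem qhatBogomolov_iso_of_qhatIsoclinic (q : ℕ) (G H : Type) [Group G] [Group H]
    (ηG : extSquare G q →* G)
    (hηG1 : ∀ g h : G, ηG (wmk G q g h) = g * h * g⁻¹ * h⁻¹)
    (hηG2 : ∀ g : G, ηG (dwmk G q g) = g ^ q)
    (ηH : extSquare H q →* H)
    (hηH1 : ∀ g h : H, ηH (wmk H q g h) = g * h * g⁻¹ * h⁻¹)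
    (hηH2 : ∀ g : H, ηH (dwmk H q g) = g ^ q)
    [((M0hat G q).subgroupOf ηG.ker).Normal] [((M0hat H q).subgroupOf ηH.ker).Normal]
    -- the subgroups `Ẑ_q`:
    (ZqG : Subgroup G) [ZqG.Normal]
    (hZqG : (ZqG : Set G) = {g | g ∈ Subgroup.center G ∧ g ^ q = 1})
    (ZqH : Subgroup H) [ZqH.Normal]
    (hZqH : (ZqH : Set H) = {g | g ∈ Subgroup.center H ∧ g ^ q = 1})
    -- q̂-isoclinism data:
    (α : (G ⧸ ZqG) ≃* (H ⧸ ZqH)) (β : qPowComm G q ≃* qPowComm H q)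
    (hαβ : ∀ (a₁ b₁ : G) (a₂ b₂ : H),
      α (QuotientGroup.mk a₁) = QuotientGroup.mk a₂ →
      α (QuotientGroup.mk b₁) = QuotientGroup.mk b₂ →
      ((β ⟨a₁ * b₁ * a₁⁻¹ * b₁⁻¹, commutator_mem_qPowComm G q a₁ b₁⟩ : qPowComm H q) : H)
          = a₂ * b₂ * a₂⁻¹ * b₂⁻¹ ∧
      ((β ⟨a₁ ^ q, pow_mem_qPowComm G q a₁⟩ : qPowComm H q) : H) = a₂ ^ q) :
    Nonempty ((ηG.ker ⧸ (M0hat G q).subgroupOf ηG.ker) ≃*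
              (ηH.ker ⧸ (M0hat H q).subgroupOf ηH.ker)) := by
  classical
  -- the two `q̂`-transfer homomorphisms
  set fG : G →* H ⧸ ZqH := α.toMonoidHom.comp (QuotientGroup.mk' ZqG) with hfG
  set fH : H →* G ⧸ ZqG := α.symm.toMonoidHom.comp (QuotientGroup.mk' ZqH) with hfH
  obtain ⟨Φ, hΦt, hΦd⟩ := exists_Phi q ZqH hZqH fG
  obtain ⟨Ψ, hΨt, hΨd⟩ := exists_Phi q ZqG hZqG fH
  have hfGapp : ∀ g : G, fG g = α (QuotientGroup.mk g) := fun g => rfl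
  have hfHapp : ∀ a : H, fH a = α.symm (QuotientGroup.mk a) := fun a => rfl
  -- transport of commutation relations and q-th power triviality via β
  have hcomm : ∀ (x y : G) (a b : H), α (QuotientGroup.mk x) = QuotientGroup.mk a →
      α (QuotientGroup.mk y) = QuotientGroup.mk b → x * y = y * x → a * b = b * a := by
    intro x y a b hx hy hxy
    have h1 := (hαβ x y a b hx hy).1
    have h2 : (⟨x * y * x⁻¹ * y⁻¹, commutator_mem_qPowComm G q x y⟩ : qPowComm G q) = 1 := by
      apply Subtype.ext
      show x * y * x⁻¹ * y⁻¹ = 1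
      rw [hxy]; group
    rw [h2, map_one, OneMemClass.coe_one] at h1
    have h3 : a * b * a⁻¹ * b⁻¹ = 1 := h1.symm
    rw [← commutatorElement_def] at h3
    exact commutatorElement_eq_one_iff_mul_comm.mp h3
  have hpow : ∀ (x : G) (a : H), α (QuotientGroup.mk x) = QuotientGroup.mk a →
      x ^ q = 1 → a ^ q = 1 := by
    intro x a hx hxq
    have h1 := (hαβ x x a a hx hx).2
    have h2 : (⟨x ^ q, pow_mem_qPowComm G q x⟩ : qPowComm G q) = 1 := Subtype.ext hxq
    rw [h2, map_one, OneMemClass.coe_one] at h1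
    exact h1.symm
  -- Φ kills M0hat G
  have hkillG : ∀ x ∈ M0hat G q, Φ x = 1 := by
    intro x hx
    have : M0hat G q ≤ Φ.ker := by
      rw [M0hat_eq_closure, Subgroup.closure_le]
      rintro s (⟨a, b, hab, rfl⟩ | ⟨g, hg, rfl⟩)
      · set a' : H := Quotient.out (fG a) with ha'
        set b' : H := Quotient.out (fG b) with hb'
        have e1 : fG a = ↑a' := (coe_out ZqH _).symm
        have e2 : fG b = ↑b' := (coe_out ZqH _).symm
        show wmk G q a b ∈ Φ.ker
        rw [MonoidHom.mem_ker, hΦt a b a' b' e1 e2]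
        exact cmk_wmk_eq_one q (hcomm a b a' b' ((hfGapp a).symm.trans e1)
          ((hfGapp b).symm.trans e2) hab)
      · set a' : H := Quotient.out (fG g) with ha'
        have e1 : fG g = ↑a' := (coe_out ZqH _).symm
        show dwmk G q g ∈ Φ.ker
        rw [MonoidHom.mem_ker, hΦd g a' e1]
        exact cmk_dwmk_eq_one q (hpow g a' ((hfGapp g).symm.trans e1) hg)
    exact this hx
  have hkillH : ∀ x ∈ M0hat H q, Ψ x = 1 := by
    intro x hx
    have : M0hat H q ≤ Ψ.ker := by
      rw [M0hat_eq_closure, Subgroup.closure_le]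
      rintro s (⟨a, b, hab, rfl⟩ | ⟨g, hg, rfl⟩)
      · set a' : G := Quotient.out (fH a) with ha'
        set b' : G := Quotient.out (fH b) with hb'
        have e1 : fH a = ↑a' := (coe_out ZqG _).symm
        have e2 : fH b = ↑b' := (coe_out ZqG _).symm
        have hA : α (QuotientGroup.mk a') = QuotientGroup.mk a := by
          rw [← ((hfHapp a).symm.trans e1)]
          exact α.apply_symm_apply _
        have hB : α (QuotientGroup.mk b') = QuotientGroup.mk b := by
          rw [← ((hfHapp b).symm.trans e2)]
          exact α.apply_symm_apply _
        have ha'b' : a' * b' = b' * a' := by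
          -- transport commutation backwards through β
          by_contra hne
          -- direct: use hαβ with a', b'
          exact hne (by
            have h1 := (hαβ a' b' a b hA hB).1
            have h2 : a * b * a⁻¹ * b⁻¹ = 1 := by rw [hab]; group
            rw [h2] at h1
            have h3 : (⟨a' * b' * a'⁻¹ * b'⁻¹, commutator_mem_qPowComm G q a' b'⟩ :
                qPowComm G q) = 1 := by
              apply β.injective
              apply Subtype.ext
              rw [h1, map_one, OneMemClass.coe_one]
            have h4 : a' * b' * a'⁻¹ * b'⁻¹ = 1 := congrArg Subtype.val h3
            rw [← commutatorElement_def] at h4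
            exact commutatorElement_eq_one_iff_mul_comm.mp h4)
        show wmk H q a b ∈ Ψ.ker
        rw [MonoidHom.mem_ker, hΨt a b a' b' e1 e2]
        exact cmk_wmk_eq_one q ha'b'
      · set a' : G := Quotient.out (fH g) with ha'
        have e1 : fH g = ↑a' := (coe_out ZqG _).symm
        have hA : α (QuotientGroup.mk a') = QuotientGroup.mk g := by
          rw [← ((hfHapp g).symm.trans e1)]
          exact α.apply_symm_apply _
        have ha'q : a' ^ q = 1 := by
          have h1 := (hαβ a' a' g g hA hA).2
          rw [hg] at h1
          have h3 : (⟨a' ^ q, pow_mem_qPowComm G q a'⟩ : qPowComm G q) = 1 := by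
            apply β.injective
            apply Subtype.ext
            rw [h1, map_one, OneMemClass.coe_one]
          exact congrArg Subtype.val h3
        show dwmk H q g ∈ Ψ.ker
        rw [MonoidHom.mem_ker, hΨd g a' e1]
        exact cmk_dwmk_eq_one q ha'q
    exact this hx
  -- descend to the curly exterior squares
  let φ : (extSquare G q ⧸ M0hat G q) →* (extSquare H q ⧸ M0hat H q) :=
    QuotientGroup.lift (M0hat G q) Φ hkillG
  let ψ : (extSquare H q ⧸ M0hat H q) →* (extSquare G q ⧸ M0hat G q) :=
    QuotientGroup.lift (M0hat H q) Ψ hkillH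
  have hφ : ∀ u : extSquare G q, φ (cmk q u) = Φ u := fun u => rfl
  have hψ : ∀ u : extSquare H q, ψ (cmk q u) = Ψ u := fun u => rfl
  have hsurjG : Function.Surjective (cmk (G := G) q) := QuotientGroup.mk'_surjective _
  have hsurjH : Function.Surjective (cmk (G := H) q) := QuotientGroup.mk'_surjective _
  -- the two maps are mutually inverse
  have hretract : ∀ u : extSquare G q, ψ (φ (cmk q u)) = cmk q u := by
    intro u
    induction u using extSquare_induction with
    | h1 => simp only [map_one]
    | ht g h =>
      set a : H := Quotient.out (fG g) with ha0
      set b : H := Quotient.out (fG h) with hb0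
      have e1 : fG g = ↑a := (coe_out ZqH _).symm
      have e2 : fG h = ↑b := (coe_out ZqH _).symm
      have hg : fH a = ↑g := by
        rw [hfHapp, ← e1, hfGapp]; exact α.symm_apply_apply _
      have hh : fH b = ↑h := by
        rw [hfHapp, ← e2, hfGapp]; exact α.symm_apply_apply _
      rw [hφ, hΦt g h a b e1 e2, hψ, hΨt a b g h hg hh]
    | hd g =>
      set a : H := Quotient.out (fG g) with ha0
      have e1 : fG g = ↑a := (coe_out ZqH _).symm
      have hg : fH a = ↑g := by
        rw [hfHapp, ← e1, hfGapp]; exact α.symm_apply_apply _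
      rw [hφ, hΦd g a e1, hψ, hΨd a g hg]
    | hinv x hx => simp only [map_inv, hx]
    | hmul x y hx hy => simp only [map_mul, hx, hy]
  have hsection : ∀ u : extSquare H q, φ (ψ (cmk q u)) = cmk q u := by
    intro u
    induction u using extSquare_induction with
    | h1 => simp only [map_one]
    | ht g h =>
      set a : G := Quotient.out (fH g) with ha0
      set b : G := Quotient.out (fH h) with hb0
      have e1 : fH g = ↑a := (coe_out ZqG _).symm
      have e2 : fH h = ↑b := (coe_out ZqG _).symm
      have hg : fG a = ↑g := by
        rw [hfGapp, ← e1, hfHapp]; exact α.apply_symm_apply _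
      have hh : fG b = ↑h := by
        rw [hfGapp, ← e2, hfHapp]; exact α.apply_symm_apply _
      rw [hψ, hΨt g h a b e1 e2, hφ, hΦt a b g h hg hh]
    | hd g =>
      set a : G := Quotient.out (fH g) with ha0
      have e1 : fH g = ↑a := (coe_out ZqG _).symm
      have hg : fG a = ↑g := by
        rw [hfGapp, ← e1, hfHapp]; exact α.apply_symm_apply _
      rw [hψ, hΨd g a e1, hφ, hΦd a g hg]
    | hinv x hx => simp only [map_inv, hx]
    | hmul x y hx hy => simp only [map_mul, hx, hy]
  have hretract' : ∀ y, ψ (φ y) = y := by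
    intro y; obtain ⟨u, rfl⟩ := hsurjG y; exact hretract u
  have hsection' : ∀ y, φ (ψ y) = y := by
    intro y; obtain ⟨u, rfl⟩ := hsurjH y; exact hsection u
  let Θ : (extSquare G q ⧸ M0hat G q) ≃* (extSquare H q ⧸ M0hat H q) :=
    { toFun := φ, invFun := ψ, left_inv := hretract', right_inv := hsection',
      map_mul' := map_mul φ }
  -- the descended commutator/power maps
  have hkillηG : ∀ x ∈ M0hat G q, ηG x = 1 := by
    intro x hx
    have hle : M0hat G q ≤ ηG.ker := by
      rw [M0hat_eq_closure, Subgroup.closure_le]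
      rintro s (⟨a, b, hab, rfl⟩ | ⟨g, hg, rfl⟩)
      · show wmk G q a b ∈ ηG.ker
        rw [MonoidHom.mem_ker, hηG1, hab]; group
      · show dwmk G q g ∈ ηG.ker
        rw [MonoidHom.mem_ker, hηG2]; exact hg
    exact hle hx
  have hkillηH : ∀ x ∈ M0hat H q, ηH x = 1 := by
    intro x hx
    have hle : M0hat H q ≤ ηH.ker := by
      rw [M0hat_eq_closure, Subgroup.closure_le]
      rintro s (⟨a, b, hab, rfl⟩ | ⟨g, hg, rfl⟩)
      · show wmk H q a b ∈ ηH.ker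
        rw [MonoidHom.mem_ker, hηH1, hab]; group
      · show dwmk H q g ∈ ηH.ker
        rw [MonoidHom.mem_ker, hηH2]; exact hg
    exact hle hx
  let ηGbar : (extSquare G q ⧸ M0hat G q) →* G := QuotientGroup.lift _ ηG hkillηG
  let ηHbar : (extSquare H q ⧸ M0hat H q) →* H := QuotientGroup.lift _ ηH hkillηH
  have hηGbar : ∀ u : extSquare G q, ηGbar (cmk q u) = ηG u := fun u => rfl
  have hηHbar : ∀ u : extSquare H q, ηHbar (cmk q u) = ηH u := fun u => rfl
  -- compatibility of the descended maps with β
  have Pmain : ∀ u : extSquare G q, ∃ hm : ηG u ∈ qPowComm G q,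
      ηHbar (φ (cmk q u)) = ((β ⟨ηG u, hm⟩ : qPowComm H q) : H) := by
    intro u
    induction u using extSquare_induction with
    | h1 =>
      have hm1 : ηG (1 : extSquare G q) ∈ qPowComm G q := by
        rw [map_one]; exact one_mem _
      refine ⟨hm1, ?_⟩
      have e : (⟨ηG (1 : extSquare G q), hm1⟩ : qPowComm G q) = 1 := Subtype.ext (map_one ηG)
      rw [e]
      simp
    | ht g h =>
      have hm1 : ηG (wmk G q g h) ∈ qPowComm G q := by
        rw [hηG1]; exact commutator_mem_qPowComm G q g h
      refine ⟨hm1, ?_⟩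
      set a : H := Quotient.out (fG g) with ha0
      set b : H := Quotient.out (fG h) with hb0
      have e1 : fG g = ↑a := (coe_out ZqH _).symm
      have e2 : fG h = ↑b := (coe_out ZqH _).symm
      rw [hφ, hΦt g h a b e1 e2, hηHbar, hηH1]
      have e : (⟨ηG (wmk G q g h), hm1⟩ : qPowComm G q)
          = ⟨g * h * g⁻¹ * h⁻¹, commutator_mem_qPowComm G q g h⟩ := Subtype.ext (hηG1 g h)
      rw [e, (hαβ g h a b ((hfGapp g).symm.trans e1) ((hfGapp h).symm.trans e2)).1]
    | hd g =>
      have hm1 : ηG (dwmk G q g) ∈ qPowComm G q := by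
        rw [hηG2]; exact pow_mem_qPowComm G q g
      refine ⟨hm1, ?_⟩
      set a : H := Quotient.out (fG g) with ha0
      have e1 : fG g = ↑a := (coe_out ZqH _).symm
      rw [hφ, hΦd g a e1, hηHbar, hηH2]
      have e : (⟨ηG (dwmk G q g), hm1⟩ : qPowComm G q)
          = ⟨g ^ q, pow_mem_qPowComm G q g⟩ := Subtype.ext (hηG2 g)
      rw [e, (hαβ g g a a ((hfGapp g).symm.trans e1) ((hfGapp g).symm.trans e1)).2]
    | hinv x hx =>
      obtain ⟨hm, e⟩ := hx
      have hm1 : ηG x⁻¹ ∈ qPowComm G q := by rw [map_inv]; exact inv_mem hm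
      refine ⟨hm1, ?_⟩
      have e2 : (⟨ηG x⁻¹, hm1⟩ : qPowComm G q) = (⟨ηG x, hm⟩ : qPowComm G q)⁻¹ :=
        Subtype.ext (map_inv ηG x)
      rw [e2, map_inv, map_inv, map_inv, map_inv, e, InvMemClass.coe_inv]
    | hmul x y hx hy =>
      obtain ⟨hmx, ex⟩ := hx
      obtain ⟨hmy, ey⟩ := hy
      have hm1 : ηG (x * y) ∈ qPowComm G q := by rw [map_mul]; exact mul_mem hmx hmy
      refine ⟨hm1, ?_⟩
      have e2 : (⟨ηG (x * y), hm1⟩ : qPowComm G q)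
          = (⟨ηG x, hmx⟩ : qPowComm G q) * (⟨ηG y, hmy⟩ : qPowComm G q) :=
        Subtype.ext (map_mul ηG x y)
      rw [e2, map_mul, map_mul, map_mul, map_mul, ex, ey, Subgroup.coe_mul]
  -- the kernels correspond
  have hker_iff : ∀ y : extSquare G q ⧸ M0hat G q, ηGbar y = 1 ↔ ηHbar (φ y) = 1 := by
    intro y
    obtain ⟨u, rfl⟩ := hsurjG y
    obtain ⟨hm, e⟩ := Pmain u
    rw [hηGbar]
    constructor
    · intro h1
      have e2 : (⟨ηG u, hm⟩ : qPowComm G q) = 1 := Subtype.ext h1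
      rw [e, e2, map_one, OneMemClass.coe_one]
    · intro h1
      have h2 : ((β ⟨ηG u, hm⟩ : qPowComm H q) : H) = 1 := e.symm.trans h1
      have h3 : β ⟨ηG u, hm⟩ = 1 := Subtype.ext (by rw [h2, OneMemClass.coe_one])
      have h4 : (⟨ηG u, hm⟩ : qPowComm G q) = 1 := β.injective (h3.trans (map_one β).symm)
      exact congrArg Subtype.val h4
  -- identify the stated quotients with the kernels of the descended maps
  let rG : ηG.ker →* extSquare G q ⧸ M0hat G q := (cmk q).comp ηG.ker.subtype
  have hkerG : rG.ker = (M0hat G q).subgroupOf ηG.ker := by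
    ext x
    rw [MonoidHom.mem_ker, Subgroup.mem_subgroupOf]
    exact QuotientGroup.eq_one_iff _
  have hrangeG : rG.range = ηGbar.ker := by
    ext y
    constructor
    · rintro ⟨⟨u, hu⟩, rfl⟩
      show ηGbar (cmk q u) = 1
      rw [hηGbar]; exact hu
    · intro hy
      obtain ⟨u, rfl⟩ := hsurjG y
      have hu : u ∈ ηG.ker := by
        rw [MonoidHom.mem_ker, ← hηGbar u]; exact hy
      exact ⟨⟨u, hu⟩, rfl⟩
  let rH : ηH.ker →* extSquare H q ⧸ M0hat H q := (cmk q).comp ηH.ker.subtype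
  have hkerH : rH.ker = (M0hat H q).subgroupOf ηH.ker := by
    ext x
    rw [MonoidHom.mem_ker, Subgroup.mem_subgroupOf]
    exact QuotientGroup.eq_one_iff _
  have hrangeH : rH.range = ηHbar.ker := by
    ext y
    constructor
    · rintro ⟨⟨u, hu⟩, rfl⟩
      show ηHbar (cmk q u) = 1
      rw [hηHbar]; exact hu
    · intro hy
      obtain ⟨u, rfl⟩ := hsurjH y
      have hu : u ∈ ηH.ker := by
        rw [MonoidHom.mem_ker, ← hηHbar u]; exact hy
      exact ⟨⟨u, hu⟩, rfl⟩
  let e1G : (ηG.ker ⧸ (M0hat G q).subgroupOf ηG.ker) ≃* ηGbar.ker :=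
    (QuotientGroup.quotientMulEquivOfEq hkerG.symm).trans
      ((QuotientGroup.quotientKerEquivRange rG).trans (MulEquiv.subgroupCongr hrangeG))
  let e1H : (ηH.ker ⧸ (M0hat H q).subgroupOf ηH.ker) ≃* ηHbar.ker :=
    (QuotientGroup.quotientMulEquivOfEq hkerH.symm).trans
      ((QuotientGroup.quotientKerEquivRange rH).trans (MulEquiv.subgroupCongr hrangeH))
  let e2 : (ηGbar.ker : Subgroup (extSquare G q ⧸ M0hat G q)) ≃* ηHbar.ker :=
    { toFun := fun x => ⟨φ x.1, by
        rw [MonoidHom.mem_ker]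
        exact (hker_iff x.1).1 (MonoidHom.mem_ker.mp x.2)⟩
      invFun := fun y => ⟨ψ y.1, by
        rw [MonoidHom.mem_ker]
        apply (hker_iff (ψ y.1)).2
        rw [hsection' y.1]
        exact MonoidHom.mem_ker.mp y.2⟩
      left_inv := fun x => Subtype.ext (hretract' x.1)
      right_inv := fun y => Subtype.ext (hsection' y.1)
      map_mul' := fun x y => Subtype.ext (map_mul φ x.1 y.1) }
  exact ⟨(e1G.trans e2).trans e1H.symm⟩
end

section
/- Let q ≥ 0 be an integer, G a group, and k an odd integer. If (g⊗g)^k = 1 in G⊗^q G for all g ∈ G, then G⊗^q G ≅ ∇^q(G) × (G∧^q G). -/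
/-!
Nonabelian tensor square modulo `q` (Conduché–Ellis / Brown–Loday for `q = 0`),
presented by generators `g ⊗ h` and `{(g,g)}` with the defining relations.
-/

namespace QTensor

variable (G : Type) [Group G]

section Development

variable {G : Type} [Group G] {q : ℕ}

local notation "tt" => tmk G q
local notation "dd" => dmk G q

/-- `d g` is the diagonal element `g ⊗ g`. -/
local notation "dl" => fun (g : G) => tmk G q g g

/-- The quotient map, landing in `tensorSquare`. -/
def fmk : FreeGroup (Gen G) →* tensorSquare G q := PresentedGroup.mk (rels G q)

theorem relator_eq_one {r : FreeGroup (Gen G)} (hr : r ∈ rels G q) :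
    (fmk r : tensorSquare G q) = 1 :=
  (QuotientGroup.eq_one_iff _).mpr (Subgroup.subset_normalClosure hr)

theorem tcongr {a a' b b' : G} (ha : a = a') (hb : b = b') : tt a b = tt a' b' := by
  rw [ha, hb]

theorem rel1 (g g₁ h : G) :
    tt (g * g₁) h = tt (g * g₁ * g⁻¹) (g * h * g⁻¹) * tt g h := by
  have := relator_eq_one (G := G) (q := q)
    (Or.inl (Or.inl (Or.inl (Or.inl (Or.inl (Or.inl ⟨g, g₁, h, rfl⟩))))))
  simp only [map_mul, map_inv] at this
  rw [mul_inv_eq_one] at this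
  exact this

theorem rel2 (g h h₁ : G) :
    tt g (h * h₁) = tt g h * tt (h * g * h⁻¹) (h * h₁ * h⁻¹) := by
  have := relator_eq_one (G := G) (q := q)
    (Or.inl (Or.inl (Or.inl (Or.inl (Or.inl (Or.inr ⟨g, h, h₁, rfl⟩))))))
  simp only [map_mul, map_inv] at this
  rw [mul_inv_eq_one] at this
  exact this

theorem rel3 (g g₁ h₁ : G) :
    dd g * tt g₁ h₁ * (dd g)⁻¹ =
      tt (g ^ q * g₁ * (g ^ q)⁻¹) (g ^ q * h₁ * (g ^ q)⁻¹) := by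
  have := relator_eq_one (G := G) (q := q)
    (Or.inl (Or.inl (Or.inl (Or.inl (Or.inr ⟨g, g₁, h₁, rfl⟩)))))
  simp only [map_mul, map_inv] at this
  rw [mul_inv_eq_one] at this
  exact this

theorem rel4 (g g₁ : G) :
    dd (g * g₁) = dd g * fmk (relProd G q g g₁) * dd g₁ := by
  have := relator_eq_one (G := G) (q := q)
    (Or.inl (Or.inl (Or.inl (Or.inr ⟨g, g₁, rfl⟩))))
  simp only [map_mul, map_inv] at this
  rw [mul_inv_eq_one] at this
  exact this

theorem rel5 (g g₁ : G) :
    dd g * dd g₁ * (dd g)⁻¹ * (dd g₁)⁻¹ = tt (g ^ q) (g₁ ^ q) := by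
  have := relator_eq_one (G := G) (q := q)
    (Or.inl (Or.inl (Or.inr ⟨g, g₁, rfl⟩)))
  simp only [map_mul, map_inv] at this
  rw [mul_inv_eq_one] at this
  exact this

theorem rel6 (g h : G) :
    dd (g * h * g⁻¹ * h⁻¹) = (tt g h) ^ q := by
  have := relator_eq_one (G := G) (q := q)
    (Or.inl (Or.inr ⟨g, h, rfl⟩))
  simp only [map_mul, map_inv, map_pow] at this
  rw [mul_inv_eq_one] at this
  exact this

theorem rel7 (hq : q = 0) (g : G) : dd g = 1 := by
  have := relator_eq_one (G := G) (q := q) (Or.inr ⟨hq, g, rfl⟩)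
  exact this


theorem t_one_left (h : G) : tt 1 h = 1 := by
  have h1 := rel1 (G := G) (q := q) 1 1 h
  simp only [one_mul, mul_one, inv_one] at h1
  have : tt 1 h * (1 : tensorSquare G q) = tt 1 h * tt 1 h := by
    rw [mul_one]; exact h1
  exact (mul_left_cancel this).symm

theorem t_one_right (g : G) : tt g 1 = 1 := by
  have h1 := rel2 (G := G) (q := q) g 1 1
  simp only [one_mul, mul_one, inv_one] at h1
  have : tt g 1 * (1 : tensorSquare G q) = tt g 1 * tt g 1 := by
    rw [mul_one]; exact h1
  exact (mul_left_cancel this).symm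

theorem conj_rel (a b x y : G) :
    tt a b * tt x y =
      tt x y * tt (y * x * y⁻¹ * x⁻¹ * a * (y * x * y⁻¹ * x⁻¹)⁻¹)
        (y * x * y⁻¹ * x⁻¹ * b * (y * x * y⁻¹ * x⁻¹)⁻¹) := by
  have hA : ∀ x' y' : G, tt (x * x') (y * y') =
      tt (x * x' * x⁻¹) (x * y * x⁻¹) *
        tt (x * y * x' * (x * y)⁻¹) (x * y * y' * (x * y)⁻¹) *
        (tt x y * tt (y * x * y⁻¹) (y * y' * y⁻¹)) := by
    intro x' y'
    calc tt (x * x') (y * y')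
        = tt (x * x' * x⁻¹) (x * (y * y') * x⁻¹) * tt x (y * y') := rel1 x x' (y * y')
      _ = tt (x * x' * x⁻¹) ((x * y * x⁻¹) * (x * y' * x⁻¹)) * tt x (y * y') := by
          rw [show x * (y * y') * x⁻¹ = (x * y * x⁻¹) * (x * y' * x⁻¹) by group]
      _ = tt (x * x' * x⁻¹) (x * y * x⁻¹) *
            tt ((x * y * x⁻¹) * (x * x' * x⁻¹) * (x * y * x⁻¹)⁻¹)
              ((x * y * x⁻¹) * (x * y' * x⁻¹) * (x * y * x⁻¹)⁻¹) * tt x (y * y') := by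
          rw [rel2 (x * x' * x⁻¹) (x * y * x⁻¹) (x * y' * x⁻¹)]
      _ = tt (x * x' * x⁻¹) (x * y * x⁻¹) *
            tt (x * y * x' * (x * y)⁻¹) (x * y * y' * (x * y)⁻¹) * tt x (y * y') := by
          rw [show (x * y * x⁻¹) * (x * x' * x⁻¹) * (x * y * x⁻¹)⁻¹
                = x * y * x' * (x * y)⁻¹ by group,
              show (x * y * x⁻¹) * (x * y' * x⁻¹) * (x * y * x⁻¹)⁻¹
                = x * y * y' * (x * y)⁻¹ by group]
      _ = tt (x * x' * x⁻¹) (x * y * x⁻¹) *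
            tt (x * y * x' * (x * y)⁻¹) (x * y * y' * (x * y)⁻¹) *
            (tt x y * tt (y * x * y⁻¹) (y * y' * y⁻¹)) := by
          rw [rel2 x y y']
  have hB : ∀ x' y' : G, tt (x * x') (y * y') =
      tt (x * x' * x⁻¹) (x * y * x⁻¹) *
        (tt x y *
          (tt (y * x * x' * (y * x)⁻¹) (y * x * y' * (y * x)⁻¹) *
            tt (y * x * y⁻¹) (y * y' * y⁻¹))) := by
    intro x' y'
    calc tt (x * x') (y * y')
        = tt (x * x') y * tt (y * (x * x') * y⁻¹) (y * y' * y⁻¹) := rel2 (x * x') y y'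
      _ = tt (x * x' * x⁻¹) (x * y * x⁻¹) * tt x y *
            tt (y * (x * x') * y⁻¹) (y * y' * y⁻¹) := by rw [← rel1 x x' y]
      _ = tt (x * x' * x⁻¹) (x * y * x⁻¹) * tt x y *
            tt ((y * x * y⁻¹) * (y * x' * y⁻¹)) (y * y' * y⁻¹) := by
          rw [show y * (x * x') * y⁻¹ = (y * x * y⁻¹) * (y * x' * y⁻¹) by group]
      _ = tt (x * x' * x⁻¹) (x * y * x⁻¹) * tt x y *
            (tt ((y * x * y⁻¹) * (y * x' * y⁻¹) * (y * x * y⁻¹)⁻¹)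
                ((y * x * y⁻¹) * (y * y' * y⁻¹) * (y * x * y⁻¹)⁻¹) *
              tt (y * x * y⁻¹) (y * y' * y⁻¹)) := by
          rw [rel1 (y * x * y⁻¹) (y * x' * y⁻¹) (y * y' * y⁻¹)]
      _ = tt (x * x' * x⁻¹) (x * y * x⁻¹) * tt x y *
            (tt (y * x * x' * (y * x)⁻¹) (y * x * y' * (y * x)⁻¹) *
              tt (y * x * y⁻¹) (y * y' * y⁻¹)) := by
          rw [show (y * x * y⁻¹) * (y * x' * y⁻¹) * (y * x * y⁻¹)⁻¹
                = y * x * x' * (y * x)⁻¹ by group,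
              show (y * x * y⁻¹) * (y * y' * y⁻¹) * (y * x * y⁻¹)⁻¹
                = y * x * y' * (y * x)⁻¹ by group]
      _ = tt (x * x' * x⁻¹) (x * y * x⁻¹) *
            (tt x y *
              (tt (y * x * x' * (y * x)⁻¹) (y * x * y' * (y * x)⁻¹) *
                tt (y * x * y⁻¹) (y * y' * y⁻¹))) := mul_assoc _ _ _
  have key : ∀ x' y' : G,
      tt (x * y * x' * (x * y)⁻¹) (x * y * y' * (x * y)⁻¹) * tt x y =
        tt x y * tt (y * x * x' * (y * x)⁻¹) (y * x * y' * (y * x)⁻¹) := by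
    intro x' y'
    have h0 := (mul_assoc _ _ _).symm.trans ((hA x' y').symm.trans (hB x' y'))
    have h1 := mul_left_cancel h0
    have h2 := ((mul_assoc _ _ _).trans h1).trans (mul_assoc _ _ _).symm
    exact mul_right_cancel h2
  have h2 := key ((x * y)⁻¹ * a * (x * y)) ((x * y)⁻¹ * b * (x * y))
  rw [show x * y * ((x * y)⁻¹ * a * (x * y)) * (x * y)⁻¹ = a by group,
      show x * y * ((x * y)⁻¹ * b * (x * y)) * (x * y)⁻¹ = b by group,
      show y * x * ((x * y)⁻¹ * a * (x * y)) * (y * x)⁻¹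
        = y * x * y⁻¹ * x⁻¹ * a * (y * x * y⁻¹ * x⁻¹)⁻¹ by group,
      show y * x * ((x * y)⁻¹ * b * (x * y)) * (y * x)⁻¹
        = y * x * y⁻¹ * x⁻¹ * b * (y * x * y⁻¹ * x⁻¹)⁻¹ by group] at h2
  exact h2

/-- Diagonal elements commute with all tensor elements. -/
theorem d_comm_t (g a b : G) : Commute (tt g g) (tt a b) := by
  have := conj_rel (G := G) (q := q) a b g g
  rw [show g * g * g⁻¹ * g⁻¹ * a * (g * g * g⁻¹ * g⁻¹)⁻¹ = a by group,
      show g * g * g⁻¹ * g⁻¹ * b * (g * g * g⁻¹ * g⁻¹)⁻¹ = b by group] at this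
  exact (Commute.eq this).symm

/-- Shuffle helper. -/
theorem comm_left {M : Type*} [Semigroup M] {x d : M} (h : x * d = d * x) (z : M) :
    x * (d * z) = d * (x * z) := by rw [← mul_assoc, h, mul_assoc]

/-- The fundamental diagonal expansion `(E2)`:
`d(w v) = (w ⊗ v) (v ⊗ v) ((^v w) ⊗ (^v w)) (v ⊗ w)`. -/
theorem d_expand (w v : G) :
    tt (w * v) (w * v) =
      tt w v * tt v v * (tt (v * w * v⁻¹) (v * w * v⁻¹) * tt v w) := by
  have e1 : ∀ x : G, tt (v * x) (v * x) =
      tt (v * x * v⁻¹) v * tt v v *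
        (tt (v * (v * x * v⁻¹) * v⁻¹) (v * (v * x * v⁻¹) * v⁻¹) * tt v (v * x * v⁻¹)) := by
    intro x
    calc tt (v * x) (v * x)
        = tt (v * x) v * tt (v * (v * x) * v⁻¹) (v * x * v⁻¹) := rel2 (v * x) v x
      _ = tt (v * x * v⁻¹) (v * v * v⁻¹) * tt v v * tt (v * (v * x) * v⁻¹) (v * x * v⁻¹) := by
          rw [← rel1 v x v]
      _ = tt (v * x * v⁻¹) v * tt v v * tt (v * (v * x * v⁻¹)) (v * x * v⁻¹) := by
          rw [show v * v * v⁻¹ = v by group, show v * (v * x) * v⁻¹ = v * (v * x * v⁻¹) by group]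
      _ = tt (v * x * v⁻¹) v * tt v v *
            (tt (v * (v * x * v⁻¹) * v⁻¹) (v * (v * x * v⁻¹) * v⁻¹) * tt v (v * x * v⁻¹)) := by
          rw [rel1 v (v * x * v⁻¹) (v * x * v⁻¹)]
  have e2 := e1 (v⁻¹ * w * v)
  rw [show v * (v⁻¹ * w * v) * v⁻¹ = w by group,
      show v * (v⁻¹ * w * v) = w * v by group] at e2
  exact e2

/-- `(E2)` with commuting diagonals shuffled out:
`d(wv) = m(w,v) · d(^v w) · d(v)` in left-normal form. -/
theorem d_expand' (w v : G) :
    tt (w * v) (w * v) =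
      tt w v * tt v w * tt (v * w * v⁻¹) (v * w * v⁻¹) * tt v v := by
  have e := d_expand (G := G) (q := q) w v
  have c1 : tt v v * (tt (v * w * v⁻¹) (v * w * v⁻¹) * tt v w)
      = tt (v * w * v⁻¹) (v * w * v⁻¹) * (tt v v * tt v w) :=
    comm_left ((d_comm_t v _ _).eq) _
  have c2 : tt v v * tt v w = tt v w * tt v v := (d_comm_t v v w).eq
  have c3 : tt (v * w * v⁻¹) (v * w * v⁻¹) * (tt v w * tt v v)
      = tt v w * (tt (v * w * v⁻¹) (v * w * v⁻¹) * tt v v) :=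
    comm_left ((d_comm_t _ v w).eq) _
  rw [mul_assoc, c1, c2, c3, ← mul_assoc, ← mul_assoc] at e
  exact e

/-- `m a b := (a ⊗ b)(b ⊗ a)` is a product of diagonal elements. -/
theorem m_formula (w v : G) :
    tt w v * tt v w =
      tt (w * v) (w * v) * (tt v v)⁻¹ * (tt (v * w * v⁻¹) (v * w * v⁻¹))⁻¹ := by
  rw [d_expand' w v]
  group

/-- `m a b` commutes with every tensor. -/
theorem m_comm_t (a b x y : G) : Commute (tt a b * tt b a) (tt x y) := by
  rw [m_formula]
  exact ((d_comm_t _ x y).mul_left (d_comm_t _ x y).inv_left).mul_left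
    (d_comm_t _ x y).inv_left

theorem m_comm_d (a b g : G) : Commute (tt a b * tt b a) (tt g g) := m_comm_t a b g g

/-- Twisted bilinearity of `m` in the first slot. -/
theorem m_bilin (u v w : G) :
    tt (u * v) w * tt w (u * v) =
      (tt u w * tt w u) *
        (tt (u * v * u⁻¹) (u * w * u⁻¹) * tt (u * w * u⁻¹) (u * v * u⁻¹)) := by
  rw [rel1 u v w, rel2 w u v]
  calc tt (u * v * u⁻¹) (u * w * u⁻¹) * tt u w * (tt w u * tt (u * w * u⁻¹) (u * v * u⁻¹))
      = tt (u * v * u⁻¹) (u * w * u⁻¹) *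
          ((tt u w * tt w u) * tt (u * w * u⁻¹) (u * v * u⁻¹)) := by
        rw [mul_assoc (tt (u * v * u⁻¹) (u * w * u⁻¹)), ← mul_assoc (tt u w)]
    _ = (tt (u * v * u⁻¹) (u * w * u⁻¹) * (tt u w * tt w u)) *
          tt (u * w * u⁻¹) (u * v * u⁻¹) := (mul_assoc _ _ _).symm
    _ = ((tt u w * tt w u) * tt (u * v * u⁻¹) (u * w * u⁻¹)) *
          tt (u * w * u⁻¹) (u * v * u⁻¹) := by rw [← (m_comm_t u w _ _).eq]
    _ = (tt u w * tt w u) *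
          (tt (u * v * u⁻¹) (u * w * u⁻¹) * tt (u * w * u⁻¹) (u * v * u⁻¹)) := mul_assoc _ _ _

/-- `m B⁻¹ B = (m B B)⁻¹`. -/
theorem m_inv_self (B : G) :
    tt B⁻¹ B * tt B B⁻¹ = (tt B B * tt B B)⁻¹ := by
  have e := m_bilin (G := G) (q := q) B B⁻¹ B
  rw [show B * B⁻¹ * B⁻¹ = B⁻¹ by group, show B * B * B⁻¹ = B by group,
      show B * B⁻¹ = (1 : G) by group, t_one_left, t_one_right, one_mul] at e
  exact (inv_eq_of_mul_eq_one_right e.symm).symm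

/-- The key square identity:  `d(^A w)² = d(w)²`. -/
theorem d_conj_sq (A w : G) :
    tt (A * w * A⁻¹) (A * w * A⁻¹) * tt (A * w * A⁻¹) (A * w * A⁻¹) =
      tt w w * tt w w := by
  have e1 := m_bilin (G := G) (q := q) w (w⁻¹ * A) w
  rw [show w * (w⁻¹ * A) * w⁻¹ = A * w⁻¹ by group, show w * (w⁻¹ * A) = A by group,
      show w * w * w⁻¹ = w by group] at e1
  have e2 := m_bilin (G := G) (q := q) A w⁻¹ w
  rw [show A * w⁻¹ * A⁻¹ = (A * w * A⁻¹)⁻¹ by group, m_inv_self (A * w * A⁻¹)] at e2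
  rw [e2] at e1
  have hMP : Commute (tt A w * tt w A) (tt w w * tt w w) :=
    (m_comm_d A w w).mul_right (m_comm_d A w w)
  rw [comm_left hMP.symm.eq] at e1
  have h3 : (1 : tensorSquare G q) =
      tt w w * tt w w *
        (tt (A * w * A⁻¹) (A * w * A⁻¹) * tt (A * w * A⁻¹) (A * w * A⁻¹))⁻¹ :=
    mul_left_cancel (a := tt A w * tt w A) (by rw [mul_one]; exact e1)
  exact (mul_inv_eq_one.mp h3.symm).symm


theorem eq_one_of_sq_of_odd {H : Type*} [Group H] {x : H} {K : ℕ}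
    (h2 : x ^ 2 = 1) (hK : x ^ K = 1) (hodd : Odd K) : x = 1 := by
  obtain ⟨j, hj⟩ := hodd
  have h1 : x ^ (K + 1) = x := by rw [pow_succ, hK, one_mul]
  rw [show K + 1 = 2 * (j + 1) by omega, pow_mul, h2, one_pow] at h1
  exact h1.symm

theorem d_pow_natAbs {k : ℤ} (hone : ∀ g : G, tmk G q g g ^ k = 1) (g : G) :
    tt g g ^ k.natAbs = 1 := by
  have h1 := hone g
  rcases Int.natAbs_eq k with hk | hk
  · rw [hk, zpow_natCast] at h1; exact h1
  · rw [hk, zpow_neg, zpow_natCast, inv_eq_one] at h1; exact h1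

/-- **Invariance**: diagonal elements only depend on the conjugacy class. -/
theorem d_conj {k : ℤ} (hk : Odd k) (hone : ∀ g : G, tmk G q g g ^ k = 1) (A w : G) :
    tt (A * w * A⁻¹) (A * w * A⁻¹) = tt w w := by
  have hc : Commute (tt (A * w * A⁻¹) (A * w * A⁻¹)) (tt w w)⁻¹ :=
    (d_comm_t _ w w).inv_right
  have hX2 : (tt (A * w * A⁻¹) (A * w * A⁻¹) * (tt w w)⁻¹) ^ 2 = 1 := by
    rw [hc.mul_pow, inv_pow, pow_two, pow_two, d_conj_sq A w, mul_inv_cancel]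
  have hXK : (tt (A * w * A⁻¹) (A * w * A⁻¹) * (tt w w)⁻¹) ^ k.natAbs = 1 := by
    rw [hc.mul_pow, inv_pow, d_pow_natAbs hone, d_pow_natAbs hone, inv_one, one_mul]
  exact mul_inv_eq_one.mp (eq_one_of_sq_of_odd hX2 hXK (Int.natAbs_odd.mpr hk))

/-- The `{(g,g)}` generators commute with diagonal elements. -/
theorem d_comm_dd {k : ℤ} (hk : Odd k) (hone : ∀ g : G, tmk G q g g ^ k = 1) (g a : G) :
    dd g * tt a a = tt a a * dd g := by
  have h3 := rel3 (G := G) (q := q) g a a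
  rw [d_conj hk hone (g ^ q) a] at h3
  rw [mul_inv_eq_iff_eq_mul] at h3
  exact h3

/-- Diagonal elements are central. -/
theorem d_mem_center {k : ℤ} (hk : Odd k) (hone : ∀ g : G, tmk G q g g ^ k = 1) (a : G) :
    tmk G q a a ∈ Subgroup.center (tensorSquare G q) := by
  rw [Subgroup.mem_center_iff]
  intro g
  have hg : g ∈ Subgroup.centralizer {tmk G q a a} := by
    refine PresentedGroup.generated_by _ _ ?_ g
    intro j
    rcases j with ⟨x, y⟩ | x
    · refine (Subgroup.mem_centralizer_iff (G := tensorSquare G q)).mpr ?_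
      rintro h hh
      rw [Set.mem_singleton_iff] at hh
      subst hh
      exact (d_comm_t a x y).eq
    · refine (Subgroup.mem_centralizer_iff (G := tensorSquare G q)).mpr ?_
      rintro h hh
      rw [Set.mem_singleton_iff] at hh
      subst hh
      exact (d_comm_dd hk hone x a).symm
  exact (Subgroup.mem_centralizer_iff.mp hg _ (Set.mem_singleton _)).symm

theorem m_mem_center {k : ℤ} (hk : Odd k) (hone : ∀ g : G, tmk G q g g ^ k = 1) (a b : G) :
    tmk G q a b * tmk G q b a ∈ Subgroup.center (tensorSquare G q) := by
  rw [m_formula]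
  exact mul_mem (mul_mem (d_mem_center hk hone _)
    (inv_mem (d_mem_center hk hone _))) (inv_mem (d_mem_center hk hone _))


instance centerCommGroupQT : CommGroup ↥(Subgroup.center (tensorSquare G q)) :=
  { (inferInstance : Group ↥(Subgroup.center (tensorSquare G q))) with
    mul_comm := fun a b => Subtype.ext (Subgroup.mem_center_iff.mp b.2 a) }

/-- Diagonal element, as an element of the centre. -/
def CD {k : ℤ} (hk : Odd k) (hone : ∀ g : G, tmk G q g g ^ k = 1) (a : G) :
    ↥(Subgroup.center (tensorSquare G q)) :=
  ⟨tmk G q a a, d_mem_center hk hone a⟩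

/-- `m a b = (a⊗b)(b⊗a)`, as an element of the centre. -/
def CM {k : ℤ} (hk : Odd k) (hone : ∀ g : G, tmk G q g g ^ k = 1) (a b : G) :
    ↥(Subgroup.center (tensorSquare G q)) :=
  ⟨tmk G q a b * tmk G q b a, m_mem_center hk hone a b⟩

section PostInv

variable {k : ℤ} (hk : Odd k) (hone : ∀ g : G, tmk G q g g ^ k = 1)

theorem coe_CD (a : G) : ((CD hk hone a : ↥(Subgroup.center (tensorSquare G q))) :
    tensorSquare G q) = tmk G q a a := rfl

theorem coe_CM (a b : G) : ((CM hk hone a b : ↥(Subgroup.center (tensorSquare G q))) :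
    tensorSquare G q) = tmk G q a b * tmk G q b a := rfl

theorem zd_conj (u a : G) : CD hk hone (u * a * u⁻¹) = CD hk hone a :=
  Subtype.ext (d_conj hk hone u a)

theorem zd_one : CD hk hone (1 : G) = 1 := Subtype.ext (t_one_left 1)

theorem zd_mul (w v : G) :
    CD hk hone (w * v) = CM hk hone w v * CD hk hone w * CD hk hone v := by
  apply Subtype.ext
  simp only [Subgroup.coe_mul, coe_CD, coe_CM]
  rw [mul_assoc]
  exact (d_expand' w v).trans (by rw [d_conj hk hone v w, mul_assoc, mul_assoc])

theorem zm_sym (a b : G) : CM hk hone a b = CM hk hone b a := by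
  apply Subtype.ext
  have hc := Subgroup.mem_center_iff.mp (m_mem_center hk hone a b) (tt b a)
  exact (mul_right_cancel ((mul_assoc _ _ _).trans hc)).symm

include hk hone in
/-- Invariance of `m` under simultaneous conjugation. -/
theorem m_conj_t (u a b : G) :
    tt (u * a * u⁻¹) (u * b * u⁻¹) * tt (u * b * u⁻¹) (u * a * u⁻¹) = tt a b * tt b a := by
  calc tt (u * a * u⁻¹) (u * b * u⁻¹) * tt (u * b * u⁻¹) (u * a * u⁻¹)
      = tt (u * a * u⁻¹ * (u * b * u⁻¹)) (u * a * u⁻¹ * (u * b * u⁻¹)) *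
          (tt (u * b * u⁻¹) (u * b * u⁻¹))⁻¹ *
          (tt (u * b * u⁻¹ * (u * a * u⁻¹) * (u * b * u⁻¹)⁻¹)
              (u * b * u⁻¹ * (u * a * u⁻¹) * (u * b * u⁻¹)⁻¹))⁻¹ := m_formula _ _
    _ = tt (u * (a * b) * u⁻¹) (u * (a * b) * u⁻¹) * (tt (u * b * u⁻¹) (u * b * u⁻¹))⁻¹ *
          (tt (u * (b * a * b⁻¹) * u⁻¹) (u * (b * a * b⁻¹) * u⁻¹))⁻¹ := by
        rw [show u * a * u⁻¹ * (u * b * u⁻¹) = u * (a * b) * u⁻¹ by group,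
            show u * b * u⁻¹ * (u * a * u⁻¹) * (u * b * u⁻¹)⁻¹
              = u * (b * a * b⁻¹) * u⁻¹ by group]
    _ = tt (a * b) (a * b) * (tt b b)⁻¹ * (tt (b * a * b⁻¹) (b * a * b⁻¹))⁻¹ := by
        rw [d_conj hk hone u (a * b), d_conj hk hone u b, d_conj hk hone u (b * a * b⁻¹)]
    _ = tt a b * tt b a := (m_formula a b).symm

theorem zm_conj (u a b : G) :
    CM hk hone (u * a * u⁻¹) (u * b * u⁻¹) = CM hk hone a b :=
  Subtype.ext (m_conj_t hk hone u a b)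

theorem zm_bilin (u v w : G) :
    CM hk hone (u * v) w = CM hk hone u w * CM hk hone v w := by
  apply Subtype.ext
  simp only [Subgroup.coe_mul, coe_CM]
  exact (m_bilin u v w).trans (by rw [m_conj_t hk hone u v w])

theorem zm_one (w : G) : CM hk hone 1 w = 1 := by
  apply Subtype.ext
  simp only [coe_CM]
  rw [t_one_left, t_one_right, one_mul]
  rfl

theorem zm_inv (u w : G) : CM hk hone u⁻¹ w = (CM hk hone u w)⁻¹ := by
  have h := zm_bilin hk hone u u⁻¹ w
  rw [mul_inv_cancel, zm_one] at h
  exact (inv_eq_of_mul_eq_one_right h.symm).symm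

theorem zm_invr (u w : G) : CM hk hone u w⁻¹ = (CM hk hone u w)⁻¹ := by
  rw [zm_sym, zm_inv, zm_sym]

theorem zm_diag (u : G) : CM hk hone u u = CD hk hone u * CD hk hone u :=
  Subtype.ext rfl

theorem zd_inv (u : G) : CD hk hone u⁻¹ = CD hk hone u := by
  have h := zd_mul hk hone u u⁻¹
  rw [mul_inv_cancel, zd_one, zm_invr, zm_diag] at h
  have h3 : CD hk hone u⁻¹ = (CD hk hone u * CD hk hone u) * (CD hk hone u)⁻¹ *
      ((CD hk hone u * CD hk hone u)⁻¹ * CD hk hone u * CD hk hone u⁻¹) := by group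
  rw [← h, mul_one] at h3
  exact h3.trans (by group)

/-- Single–slot conjugation invariance of `m`. -/
theorem zm_conj1 (w x y : G) : CM hk hone (w * x * w⁻¹) y = CM hk hone x y := by
  rw [zm_bilin hk hone (w * x) w⁻¹ y, zm_bilin hk hone w x y, zm_inv]
  rw [mul_comm (CM hk hone w y)]
  group

theorem zm_conj1r (w x y : G) : CM hk hone x (w * y * w⁻¹) = CM hk hone x y := by
  rw [zm_sym, zm_conj1, zm_sym]

/-- `(K3)`: diagonals of commutators vanish. -/
theorem zK3 (v u : G) : CD hk hone (v * u * v⁻¹ * u⁻¹) = 1 := by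
  rw [zd_mul hk hone (v * u * v⁻¹) u⁻¹, zd_inv, zd_conj, zm_conj1, zm_invr, zm_diag]
  group

/-- `(K2)`: `m` of a commutator with anything vanishes. -/
theorem zK2 (v u a : G) : CM hk hone (v * u * v⁻¹ * u⁻¹) a = 1 := by
  rw [zm_bilin hk hone (v * u * v⁻¹) u⁻¹ a, zm_conj1, zm_inv]
  group

theorem zm_powl (x a : G) (n : ℕ) : CM hk hone (x ^ n) a = CM hk hone x a ^ n := by
  induction n with
  | zero => rw [pow_zero, pow_zero, zm_one]
  | succ n ih => rw [pow_succ, pow_succ, zm_bilin, ih]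

theorem zm_powr (a x : G) (n : ℕ) : CM hk hone a (x ^ n) = CM hk hone a x ^ n := by
  rw [zm_sym, zm_powl]
  congr 1
  rw [zm_sym]

end PostInv


theorem t_pow_right (u : G) (n : ℕ) : tt u (u ^ n) = tt u u ^ n := by
  induction n with
  | zero => rw [pow_zero, pow_zero, t_one_right]
  | succ n ih =>
    rw [pow_succ', rel2 u u (u ^ n), show u * u * u⁻¹ = u by group,
      show u * u ^ n * u⁻¹ = u ^ n by group, ih, pow_succ']

theorem relProd_inv (c : G) :
    relProd G q c c⁻¹ =
      ((List.range (q - 1)).map (fun j => T G c⁻¹ ((c⁻¹) ^ (j + 1)))).prod := by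
  unfold relProd
  congr 1
  apply List.map_congr_left
  intro j _
  congr 2
  have hcomm : Commute (c ^ ((1 : ℤ) - (q : ℤ) + (j + 1 : ℕ))) c⁻¹ :=
    ((Commute.refl c).inv_right).zpow_left _
  rw [hcomm.eq, mul_inv_cancel_right]

theorem fmk_relProd_inv_one (c : G) (hc : tmk G q c c = 1)
    (hci : tmk G q c⁻¹ c⁻¹ = tmk G q c c) :
    fmk (q := q) (relProd G q c c⁻¹) = 1 := by
  rw [relProd_inv, map_list_prod, List.map_map]
  apply List.prod_eq_one
  intro x hx
  obtain ⟨j, hj, rfl⟩ := List.mem_map.mp hx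
  show fmk (T G c⁻¹ ((c⁻¹) ^ (j + 1))) = (1 : tensorSquare G q)
  have h0 : fmk (T G c⁻¹ ((c⁻¹) ^ (j + 1))) = tmk G q c⁻¹ ((c⁻¹) ^ (j + 1)) := rfl
  rw [h0, t_pow_right, hci, hc, one_pow]

theorem fmk_relProd_base (g₁ : G) : fmk (q := q) (relProd G q 1 g₁) = 1 := by
  unfold relProd
  rw [map_list_prod, List.map_map]
  apply List.prod_eq_one
  intro x hx
  obtain ⟨j, hj, rfl⟩ := List.mem_map.mp hx
  show fmk (T G (1 : G)⁻¹
    (((1 : G) ^ ((1 : ℤ) - (q : ℤ) + (j + 1 : ℕ)) * g₁ *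
      ((1 : G) ^ ((1 : ℤ) - (q : ℤ) + (j + 1 : ℕ)))⁻¹) ^ (j + 1))) = (1 : tensorSquare G q)
  have h0 : fmk (T G (1 : G)⁻¹
      (((1 : G) ^ ((1 : ℤ) - (q : ℤ) + (j + 1 : ℕ)) * g₁ *
        ((1 : G) ^ ((1 : ℤ) - (q : ℤ) + (j + 1 : ℕ)))⁻¹) ^ (j + 1))) =
      tmk G q (1 : G)⁻¹
      (((1 : G) ^ ((1 : ℤ) - (q : ℤ) + (j + 1 : ℕ)) * g₁ *
        ((1 : G) ^ ((1 : ℤ) - (q : ℤ) + (j + 1 : ℕ)))⁻¹) ^ (j + 1)) := rfl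
  rw [h0, inv_one, t_one_left]

theorem dd_one : dmk G q (1 : G) = 1 := by
  have h := rel4 (G := G) (q := q) 1 1
  rw [fmk_relProd_base, show (1 : G) * 1 = (1 : G) by group, mul_one] at h
  have h2 : dd (1 : G) * (1 : tensorSquare G q) = dd 1 * dd 1 := by
    rw [mul_one]; exact h
  exact (mul_left_cancel h2).symm

section PostInv2

variable {k : ℤ} (hk : Odd k) (hone : ∀ g : G, tmk G q g g ^ k = 1)

include hk hone in
theorem K3t (v u : G) :
    tmk G q (v * u * v⁻¹ * u⁻¹) (v * u * v⁻¹ * u⁻¹) = 1 := by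
  have := congrArg (fun z : ↥(Subgroup.center (tensorSquare G q)) =>
    (z : tensorSquare G q)) (zK3 hk hone v u)
  simpa [coe_CD] using this

include hk hone in
theorem d_inv_t (a : G) : tmk G q a⁻¹ a⁻¹ = tmk G q a a := by
  have := congrArg (fun z : ↥(Subgroup.center (tensorSquare G q)) =>
    (z : tensorSquare G q)) (zd_inv hk hone a)
  simpa [coe_CD] using this

include hk hone in
theorem dd_inv_comm (v u : G) :
    dmk G q ((v * u * v⁻¹ * u⁻¹)⁻¹) = (dmk G q (v * u * v⁻¹ * u⁻¹))⁻¹ := by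
  have h := rel4 (G := G) (q := q) (v * u * v⁻¹ * u⁻¹) ((v * u * v⁻¹ * u⁻¹)⁻¹)
  rw [fmk_relProd_inv_one _ (K3t hk hone v u)
      ((d_inv_t hk hone (v * u * v⁻¹ * u⁻¹)).trans rfl), mul_one,
    show v * u * v⁻¹ * u⁻¹ * (v * u * v⁻¹ * u⁻¹)⁻¹ = (1 : G) by group, dd_one] at h
  exact (inv_eq_of_mul_eq_one_right h.symm).symm

include hk hone in
theorem zm_qpow (g h : G) : CM hk hone g h ^ q = 1 := by
  apply Subtype.ext
  rw [SubmonoidClass.coe_pow, coe_CM, OneMemClass.coe_one]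
  have hcx := Subgroup.mem_center_iff.mp (m_mem_center hk hone g h) (tt g h)
  have hcomm : Commute (tt g h) (tt h g) :=
    mul_left_cancel (hcx.trans (mul_assoc (tt g h) (tt h g) (tt g h)))
  rw [hcomm.mul_pow, ← rel6 g h, ← rel6 h g,
    show h * g * h⁻¹ * g⁻¹ = (g * h * g⁻¹ * h⁻¹)⁻¹ by group,
    dd_inv_comm hk hone g h, mul_inv_cancel]

end PostInv2


theorem list_prod_pow {M : Type*} [Monoid M] (x : M) (e : ℕ → ℕ) :
    ∀ n : ℕ, ((List.range n).map (fun j => x ^ e j)).prod =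
      x ^ ((List.range n).map e).sum := by
  intro n
  induction n with
  | zero => simp
  | succ n ih =>
    rw [List.range_succ, List.map_append, List.map_append, List.prod_append,
      List.sum_append, ih]
    simp [pow_add]

/-- Exponent `m` with `2m ≡ 1` modulo the exponent of the diagonal subgroup. -/
def mExp (k : ℤ) : ℕ := (k.natAbs + 1) / 2

/-- `1 + 2 + ⋯ + (q-1)`. -/
def sExp (q : ℕ) : ℕ := ((List.range (q - 1)).map (fun j => j + 1)).sum

theorem two_mExp {k : ℤ} (hk : Odd k) : 2 * mExp k = k.natAbs + 1 := by
  obtain ⟨j, hj⟩ := Int.natAbs_odd.mpr hk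
  unfold mExp
  omega

section Retract

variable {k : ℤ} (hk : Odd k) (hone : ∀ g : G, tmk G q g g ^ k = 1)

theorem zm_bilinr (a x y : G) :
    CM hk hone a (x * y) = CM hk hone a x * CM hk hone a y := by
  rw [zm_sym hk hone a (x * y), zm_bilin, zm_sym hk hone x a, zm_sym hk hone y a]

/-- The images of the generators under the retraction. -/
def rfun : Gen G → ↥(Subgroup.center (tensorSquare G q)) := fun j =>
  match j with
  | Gen.t a b => CM hk hone a b ^ mExp k
  | Gen.d g => ((CD hk hone g)⁻¹) ^ (mExp k * sExp q)

theorem rfun_t (a b : G) : rfun hk hone (Gen.t a b) = CM hk hone a b ^ mExp k := rfl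

theorem rfun_d (g : G) :
    rfun hk hone (Gen.d g) = ((CD hk hone g)⁻¹) ^ (mExp k * sExp q) := rfl

include hk hone in
theorem lift_relProd (g g₁ : G) :
    FreeGroup.lift (rfun hk hone) (relProd G q g g₁) =
      ((CM hk hone g g₁)⁻¹) ^ (mExp k * sExp q) := by
  unfold relProd
  rw [map_list_prod, List.map_map]
  have hmap : ∀ j ∈ List.range (q - 1),
      (FreeGroup.lift (rfun hk hone) ∘ fun j =>
        T G g⁻¹ ((g ^ ((1 : ℤ) - (q : ℤ) + (j + 1 : ℕ)) * g₁ *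
          (g ^ ((1 : ℤ) - (q : ℤ) + (j + 1 : ℕ)))⁻¹) ^ (j + 1))) j =
      ((CM hk hone g g₁)⁻¹) ^ (mExp k * (j + 1)) := by
    intro j _
    show FreeGroup.lift (rfun hk hone)
        (T G g⁻¹ ((g ^ ((1 : ℤ) - (q : ℤ) + (j + 1 : ℕ)) * g₁ *
          (g ^ ((1 : ℤ) - (q : ℤ) + (j + 1 : ℕ)))⁻¹) ^ (j + 1))) = _
    rw [T, FreeGroup.lift_apply_of, rfun_t, zm_inv, zm_powr, zm_conj1r, ← inv_pow, ← pow_mul,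
      mul_comm (j + 1) (mExp k)]
  rw [List.map_congr_left hmap, list_prod_pow ((CM hk hone g g₁)⁻¹)
    (fun j => mExp k * (j + 1)) (q - 1)]
  congr 1
  rw [List.sum_map_mul_left]
  rfl

include hk hone in
theorem rfun_check : ∀ r ∈ rels G q, FreeGroup.lift (rfun hk hone) r = 1 := by
  rintro r ((((((⟨g, g₁, h, rfl⟩ | ⟨g, h, h₁, rfl⟩) | ⟨g, g₁, h₁, rfl⟩) | ⟨g, g₁, rfl⟩) |
    ⟨g, g₁, rfl⟩) | ⟨g, h, rfl⟩) | ⟨hq, g, rfl⟩)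
  · simp only [T, map_mul, map_inv, FreeGroup.lift_apply_of, rfun_t]
    rw [zm_conj hk hone g g₁ h, zm_bilin hk hone g g₁ h, mul_pow,
      mul_comm (CM hk hone g h ^ mExp k)]
    group
  · simp only [T, map_mul, map_inv, FreeGroup.lift_apply_of, rfun_t]
    rw [zm_conj hk hone h g h₁, zm_bilinr hk hone g h h₁, mul_pow]
    group
  · simp only [T, D, map_mul, map_inv, FreeGroup.lift_apply_of, rfun_t, rfun_d]
    rw [zm_conj hk hone (g ^ q) g₁ h₁,
      mul_comm (((CD hk hone g)⁻¹) ^ (mExp k * sExp q)) (CM hk hone g₁ h₁ ^ mExp k)]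
    group
  · simp only [T, D, map_mul, map_inv, FreeGroup.lift_apply_of, rfun_t, rfun_d]
    rw [lift_relProd hk hone g g₁, zd_mul hk hone g g₁]
    have hE : ((CM hk hone g g₁ * CD hk hone g * CD hk hone g₁)⁻¹) ^ (mExp k * sExp q)
        = ((CD hk hone g)⁻¹) ^ (mExp k * sExp q) *
          (((CM hk hone g g₁)⁻¹) ^ (mExp k * sExp q)) *
          ((CD hk hone g₁)⁻¹) ^ (mExp k * sExp q) := by
      rw [mul_inv, mul_inv, mul_pow, mul_pow,
        mul_comm ((CM hk hone g g₁)⁻¹ ^ (mExp k * sExp q))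
          ((CD hk hone g)⁻¹ ^ (mExp k * sExp q))]
    rw [hE]
    group
  · simp only [T, D, map_mul, map_inv, FreeGroup.lift_apply_of, rfun_t, rfun_d]
    have h5 : CM hk hone (g ^ q) (g₁ ^ q) = 1 := by
      rw [zm_powl, zm_powr, zm_qpow hk hone, one_pow]
    rw [h5, one_pow, inv_one, mul_one,
      mul_comm (((CD hk hone g)⁻¹) ^ (mExp k * sExp q))
        (((CD hk hone g₁)⁻¹) ^ (mExp k * sExp q))]
    group
  · simp only [T, D, map_mul, map_inv, map_pow, FreeGroup.lift_apply_of, rfun_t, rfun_d]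
    rw [zK3 hk hone g h, inv_one, one_pow, one_mul, pow_right_comm,
      zm_qpow hk hone, one_pow, inv_one]
  · subst hq
    simp only [D, FreeGroup.lift_apply_of, rfun_d]
    have : sExp 0 = 0 := rfl
    rw [this, Nat.mul_zero, pow_zero]

end Retract


section Retract2

variable {k : ℤ} (hk : Odd k) (hone : ∀ g : G, tmk G q g g ^ k = 1)

/-- The retraction, valued in the centre. -/
def r0 : tensorSquare G q →* ↥(Subgroup.center (tensorSquare G q)) :=
  PresentedGroup.toGroup (rfun_check hk hone)

theorem r0_t (a b : G) : r0 hk hone (tmk G q a b) = CM hk hone a b ^ mExp k :=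
  PresentedGroup.toGroup.of (rfun_check hk hone)

theorem r0_d (g : G) :
    r0 hk hone (dmk G q g) = ((CD hk hone g)⁻¹) ^ (mExp k * sExp q) :=
  PresentedGroup.toGroup.of (rfun_check hk hone)

theorem zd_powK (a : G) : CD hk hone a ^ k.natAbs = 1 := by
  apply Subtype.ext
  rw [SubmonoidClass.coe_pow, coe_CD, OneMemClass.coe_one]
  exact d_pow_natAbs hone a

theorem r0_diag (a : G) : r0 hk hone (tmk G q a a) = CD hk hone a := by
  rw [r0_t hk hone a a, zm_diag, ← pow_two, ← pow_mul, two_mExp hk, pow_succ,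
    zd_powK hk hone a, one_mul]

/-- The retraction, as an endomorphism of the tensor square. -/
def rr : tensorSquare G q →* tensorSquare G q :=
  (Subgroup.center (tensorSquare G q)).subtype.comp (r0 hk hone)

theorem rr_t (a b : G) :
    rr hk hone (tmk G q a b) = (tmk G q a b * tmk G q b a) ^ mExp k := by
  unfold rr
  rw [MonoidHom.comp_apply, r0_t hk hone]
  rfl

theorem rr_d (g : G) :
    rr hk hone (dmk G q g) = ((tmk G q g g)⁻¹) ^ (mExp k * sExp q) := by
  unfold rr
  rw [MonoidHom.comp_apply, r0_d hk hone]
  rfl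

theorem rr_diag (a : G) : rr hk hone (tmk G q a a) = tmk G q a a := by
  unfold rr
  rw [MonoidHom.comp_apply, r0_diag hk hone]
  rfl

theorem d_mem_nabla (a : G) : tmk G q a a ∈ nabla G q :=
  Subgroup.subset_normalClosure ⟨a, rfl⟩

theorem m_mem_nabla (a b : G) : tmk G q a b * tmk G q b a ∈ nabla G q := by
  rw [m_formula]
  exact mul_mem (mul_mem (d_mem_nabla _) (inv_mem (d_mem_nabla _)))
    (inv_mem (d_mem_nabla _))

include hk hone in
theorem rr_mem_nabla (x : tensorSquare G q) : rr hk hone x ∈ nabla G q := by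
  have hx : x ∈ (nabla G q).comap (rr hk hone) := by
    refine PresentedGroup.generated_by (rels G q) ((nabla G q).comap (rr hk hone)) ?_ x
    intro j
    rcases j with ⟨a, b⟩ | g
    · refine Subgroup.mem_comap.mpr ?_
      show rr hk hone (tmk G q a b) ∈ nabla G q
      rw [rr_t hk hone]
      exact pow_mem (m_mem_nabla a b) _
    · refine Subgroup.mem_comap.mpr ?_
      show rr hk hone (dmk G q g) ∈ nabla G q
      rw [rr_d hk hone]
      exact pow_mem (inv_mem (d_mem_nabla g)) _
  exact Subgroup.mem_comap.mp hx

/-- The subgroup of fixed points of the retraction. -/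
def fixedSub : Subgroup (tensorSquare G q) where
  carrier := {x | rr hk hone x = x}
  mul_mem' := by
    intro a b ha hb
    simp only [Set.mem_setOf_eq, map_mul] at *
    rw [ha, hb]
  one_mem' := by simp only [Set.mem_setOf_eq, map_one]
  inv_mem' := by
    intro a ha
    simp only [Set.mem_setOf_eq, map_inv] at *
    rw [ha]

theorem mem_fixedSub {x : tensorSquare G q} :
    x ∈ fixedSub hk hone ↔ rr hk hone x = x := Iff.rfl

include hk hone in
theorem rr_fix_nabla {x : tensorSquare G q} (hx : x ∈ nabla G q) :
    rr hk hone x = x := by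
  have hle : nabla G q ≤ fixedSub hk hone := by
    show Subgroup.closure (Group.conjugatesOfSet {x | ∃ g : G, x = tmk G q g g}) ≤
      fixedSub hk hone
    refine (Subgroup.closure_le _).mpr ?_
    intro y hy
    obtain ⟨a0, ha0, hconj⟩ := Group.mem_conjugatesOfSet_iff.mp hy
    obtain ⟨g0, rfl⟩ := ha0
    obtain ⟨c, hc⟩ := isConj_iff.mp hconj
    have hcen := Subgroup.mem_center_iff.mp (d_mem_center hk hone g0) c
    have hy' : y = tmk G q g0 g0 := by rw [← hc, hcen, mul_inv_cancel_right]
    show y ∈ fixedSub hk hone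
    rw [mem_fixedSub, hy']
    exact rr_diag hk hone g0
  exact (mem_fixedSub hk hone).mp (hle hx)

end Retract2


end Development

end QTensor

open QTensor in
/-- If `k` is odd and `(g ⊗ g)^k = 1` for all `g ∈ G`, then
`G ⊗^q G ≅ ∇^q(G) × (G ∧^q G)`. -/
theorem tensorSquare_iso_nabla_prod_extSquare (q : ℕ) (G : Type) [Group G]
    (k : ℤ) (hk : Odd k) (h : ∀ g : G, (tmk G q g g) ^ k = 1) :
    Nonempty (tensorSquare G q ≃* (nabla G q) × extSquare G q) := by
  let π : tensorSquare G q →* extSquare G q := QuotientGroup.mk' (nabla G q)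
  let Φ : tensorSquare G q →* (nabla G q) × extSquare G q :=
    MonoidHom.prod ((rr hk h).codRestrict (nabla G q) (rr_mem_nabla hk h)) π
  have hΦ1 : ∀ x : tensorSquare G q,
      ((Φ x).1 : tensorSquare G q) = rr hk h x := fun x => rfl
  have hΦ2 : ∀ x : tensorSquare G q, (Φ x).2 = π x := fun x => rfl
  have hinj : Function.Injective Φ := by
    rw [injective_iff_map_eq_one]
    intro x hx
    have h2 : π x = 1 := by rw [← hΦ2 x, hx]; rfl
    have hxN : x ∈ nabla G q := (QuotientGroup.eq_one_iff x).mp h2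
    have h1 : rr hk h x = 1 := by
      rw [← hΦ1 x, hx]
      rfl
    rw [← rr_fix_nabla hk h hxN, h1]
  have hsurj : Function.Surjective Φ := by
    rintro ⟨n, z⟩
    obtain ⟨y, rfl⟩ := QuotientGroup.mk'_surjective (nabla G q) z
    refine ⟨y * (rr hk h y)⁻¹ * (n : tensorSquare G q), ?_⟩
    have hmem1 : (rr hk h y)⁻¹ ∈ nabla G q := inv_mem (rr_mem_nabla hk h y)
    apply Prod.ext
    · apply Subtype.ext
      rw [hΦ1]
      rw [map_mul, map_mul, map_inv]
      rw [rr_fix_nabla hk h (rr_mem_nabla hk h y), rr_fix_nabla hk h n.2]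
      rw [mul_inv_cancel, one_mul]
    · rw [hΦ2]
      show π y * π ((rr hk h y)⁻¹) * π (n : tensorSquare G q) = _
      have e1 : π ((rr hk h y)⁻¹) = 1 := (QuotientGroup.eq_one_iff _).mpr hmem1
      have e2 : π (n : tensorSquare G q) = 1 := (QuotientGroup.eq_one_iff _).mpr n.2
      rw [e1, e2, mul_one, mul_one]
      rfl
  exact ⟨MulEquiv.ofBijective Φ ⟨hinj, hsurj⟩⟩
end
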